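/- In type A_11 (triangulations of a 12-gon), there exists a collection of triangulations, one for each point of X'_{F_2}(11), whose cluster tori cover X'_{F_2}(11) but, for every field F with more than 2 elements, fail to cover X'_F(11). -/

import Mathlib

/-- The projective line over a field `F`. -/
abbrev P1 (F : Type*) [Field F] := Projectivization F (F × F)

/-- The point `[1:0]` of the projective line. -/
noncomputable def ptZero (F : Type*) [Field F] : P1 F :=
  Projectivization.mk F (1, 0) (fun h => one_ne_zero (congrArg Prod.fst h))

/-- The point `[0:1]` of the projective line. -/
noncomputable def ptInf (F : Type*) [Field F] : P1 F :=
  Projectivization.mk F (0, 1) (fun h => one_ne_zero (congrArg Prod.snd h))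

/-- The point `[1:1]` of the projective line. -/
noncomputable def ptOne (F : Type*) [Field F] : P1 F :=
  Projectivization.mk F (1, 1) (fun h => one_ne_zero (congrArg Prod.fst h))

/-- `p = (i, j)` is a diagonal of the convex `(m+1)`-gon with vertices `0, …, m`:
`i < j`, the two vertices are not consecutive, and `(0, m)` is excluded (it is a side). -/
def IsDiag (m : ℕ) (p : ℕ × ℕ) : Prop :=
  p.1 + 2 ≤ p.2 ∧ p.2 ≤ m ∧ ¬(p.1 = 0 ∧ p.2 = m)

instance (m : ℕ) (p : ℕ × ℕ) : Decidable (IsDiag m p) := by unfold IsDiag; infer_instance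

/-- The type of diagonals of the convex `(m+1)`-gon. -/
abbrev Diagonal (m : ℕ) := {p : ℕ × ℕ // IsDiag m p}

/-- Two diagonals cross in the interior of the polygon. -/
def Crossing {m : ℕ} (d e : Diagonal m) : Prop :=
  (d.val.1 < e.val.1 ∧ e.val.1 < d.val.2 ∧ d.val.2 < e.val.2) ∨
  (e.val.1 < d.val.1 ∧ d.val.1 < e.val.2 ∧ e.val.2 < d.val.2)

/-- A triangulation of the convex `(m+1)`-gon: a maximal set of pairwise
non-crossing diagonals (maximality = having `(m+1) - 3` diagonals). -/
structure Triangulation (m : ℕ) where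
  diags : Finset (Diagonal m)
  noncross : ∀ d ∈ diags, ∀ e ∈ diags, ¬ Crossing d e
  card_eq : diags.card = m - 2

/-- `y` takes distinct values on the endpoints of every diagonal of `T`
(i.e. `y` lies in the cluster torus of `T`). -/
def ProperDiags {F : Type*} [Field F] {m : ℕ} (T : Triangulation m) (y : ℕ → P1 F) : Prop :=
  ∀ d ∈ T.diags, y d.val.1 ≠ y d.val.2

/-- `c` is a proper coloring of the full graph of the triangulation `T`
(sides of the polygon together with the diagonals of `T`). -/
def ProperGraph {F : Type*} [Field F] {m : ℕ} (T : Triangulation m) (c : ℕ → P1 F) : Prop :=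
  (∀ i < m, c i ≠ c (i + 1)) ∧ c m ≠ c 0 ∧ ProperDiags T c

/-- `y` is a point of `X_F(m)`: `y 0 = [1:0]`, `y m = [0:1]`, consecutive entries distinct. -/
def XCond (F : Type*) [Field F] (m : ℕ) (y : ℕ → P1 F) : Prop :=
  y 0 = ptZero F ∧ y m = ptInf F ∧ ∀ i < m, y i ≠ y (i + 1)

/-- `y` is the alternating sequence `([1:0], [0:1], [1:0], …)` on `0, …, m`. -/
def IsAltSeq (F : Type*) [Field F] (m : ℕ) (y : ℕ → P1 F) : Prop :=
  ∀ i ≤ m, y i = if i % 2 = 0 then ptZero F else ptInf F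

/-- The diagonal `d` is valid for the point `y`: its endpoints have distinct labels and
on each of the two sub-polygons determined by `d` the labels take at least three values. -/
def ValidDiag (F : Type*) [Field F] (m : ℕ) (y : ℕ → P1 F) (d : Diagonal m) : Prop :=
  y d.val.1 ≠ y d.val.2 ∧
  3 ≤ (y '' (Set.Icc d.val.1 d.val.2)).ncard ∧
  3 ≤ (y '' (Set.Icc 0 d.val.1 ∪ Set.Icc d.val.2 m)).ncard

/-- `T'` is obtained from `T` by removing the diagonals `old` and adding the diagonals `new`. -/
def SwapMove {m : ℕ} (T T' : Triangulation m) (old new : Finset (Diagonal m)) : Prop :=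
  old ⊆ T.diags ∧ T'.diags = (T.diags \ old) ∪ new

/-- Zig-zag hexagonal move: inside a hexagonal sub-polygon with vertices
`v 0 < ⋯ < v 5`, replace the zig-zag `{15, 35, 36}` by the zig-zag `{24, 26, 46}`
(in the labels `1, …, 6` of the hexagon). -/
def ZigZagMoveOne {m : ℕ} (T T' : Triangulation m) : Prop :=
  ∃ v : Fin 6 → ℕ, StrictMono v ∧ v 5 ≤ m ∧
    ∃ (h1 : IsDiag m (v 0, v 4)) (h2 : IsDiag m (v 2, v 4)) (h3 : IsDiag m (v 2, v 5))
      (h4 : IsDiag m (v 1, v 3)) (h5 : IsDiag m (v 1, v 5)) (h6 : IsDiag m (v 3, v 5)),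
      SwapMove T T' {⟨(v 0, v 4), h1⟩, ⟨(v 2, v 4), h2⟩, ⟨(v 2, v 5), h3⟩}
        {⟨(v 1, v 3), h4⟩, ⟨(v 1, v 5), h5⟩, ⟨(v 3, v 5), h6⟩}

/-- Inscribed-triangle hexagonal move: inside a hexagonal sub-polygon with vertices
`v 0 < ⋯ < v 5`, replace the inscribed triangle `{13, 35, 51}` by `{24, 46, 62}`. -/
def InscribedMoveOne {m : ℕ} (T T' : Triangulation m) : Prop :=
  ∃ v : Fin 6 → ℕ, StrictMono v ∧ v 5 ≤ m ∧
    ∃ (h1 : IsDiag m (v 0, v 2)) (h2 : IsDiag m (v 2, v 4)) (h3 : IsDiag m (v 0, v 4))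
      (h4 : IsDiag m (v 1, v 3)) (h5 : IsDiag m (v 3, v 5)) (h6 : IsDiag m (v 1, v 5)),
      SwapMove T T' {⟨(v 0, v 2), h1⟩, ⟨(v 2, v 4), h2⟩, ⟨(v 0, v 4), h3⟩}
        {⟨(v 1, v 3), h4⟩, ⟨(v 3, v 5), h5⟩, ⟨(v 1, v 5), h6⟩}

/-- A hexagonal move (in either direction). -/
def HexMove {m : ℕ} (T T' : Triangulation m) : Prop :=
  ZigZagMoveOne T T' ∨ ZigZagMoveOne T' T ∨ InscribedMoveOne T T' ∨ InscribedMoveOne T' T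



/-! ### Auxiliary machinery -/

lemma p1_ne {F : Type*} [Field F] {a b c d : F} (hab : (a,b) ≠ (0:F×F)) (hcd : (c,d) ≠ (0:F×F))
    (h : a*d ≠ b*c) : Projectivization.mk F (a,b) hab ≠ Projectivization.mk F (c,d) hcd := by
  intro he
  rw [Projectivization.mk_eq_mk_iff] at he
  obtain ⟨u, hu⟩ := he
  have h1 : (u:F) * c = a := congrArg Prod.fst hu
  have h2 : (u:F) * d = b := congrArg Prod.snd hu
  exact h (by rw [← h1, ← h2]; ring)

lemma p1two_surj (p : P1 (ZMod 2)) :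
    p = ptZero (ZMod 2) ∨ p = ptOne (ZMod 2) ∨ p = ptInf (ZMod 2) := by
  induction p using Projectivization.ind with
  | h v hv =>
    obtain ⟨x, y⟩ := v
    fin_cases x <;> fin_cases y
    · exact absurd rfl hv
    · right; right; rfl
    · left; rfl
    · right; left; rfl

lemma hZO2 : ptZero (ZMod 2) ≠ ptOne (ZMod 2) := p1_ne _ _ (by decide)
lemma hZI2 : ptZero (ZMod 2) ≠ ptInf (ZMod 2) := p1_ne _ _ (by decide)
lemma hOI2 : ptOne (ZMod 2) ≠ ptInf (ZMod 2) := p1_ne _ _ (by decide)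

noncomputable def e3 (v : Fin 3) : P1 (ZMod 2) :=
  if v = 0 then ptZero (ZMod 2) else if v = 1 then ptOne (ZMod 2) else ptInf (ZMod 2)

open Classical in
noncomputable def code (p : P1 (ZMod 2)) : Fin 3 :=
  if p = ptZero (ZMod 2) then 0 else if p = ptInf (ZMod 2) then 2 else 1

lemma ecode (p : P1 (ZMod 2)) : e3 (code p) = p := by
  rcases p1two_surj p with rfl | rfl | rfl
  · simp [code, e3]
  · rw [code, if_neg (Ne.symm hZO2), if_neg hOI2]; simp [e3]
  · rw [code, if_neg (Ne.symm hZI2), if_pos rfl]; simp [e3]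

lemma code_ptZero : code (ptZero (ZMod 2)) = 0 := by simp [code]
lemma code_ptInf : code (ptInf (ZMod 2)) = 2 := by
  rw [code, if_neg (Ne.symm hZI2), if_pos rfl]

def CrossP (p q : ℕ × ℕ) : Prop := p.1 < q.1 ∧ q.1 < p.2 ∧ p.2 < q.2
instance (p q : ℕ × ℕ) : Decidable (CrossP p q) := by unfold CrossP; infer_instance

def badPairs : List (ℕ × ℕ) :=
  [(0,5),(0,9),(5,9),(2,6),(2,11),(6,11),(1,3),(1,8),(3,8),(4,7),(4,10),(7,10)]

def TriOK (l : List (ℕ × ℕ)) : Prop :=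
  l.length = 9 ∧ (∀ p ∈ l, IsDiag 11 p) ∧
  l.Pairwise (fun p q => ¬ CrossP p q ∧ ¬ CrossP q p) ∧ l.Nodup ∧ ∃ p ∈ l, p ∈ badPairs
instance (l : List (ℕ × ℕ)) : Decidable (TriOK l) := by unfold TriOK; infer_instance

def triOfList (l : List (ℕ × ℕ)) (h : TriOK l) : Triangulation 11 where
  diags := (l.pmap (fun p hp => (⟨p, hp⟩ : Diagonal 11)) h.2.1).toFinset
  noncross := by
    intro d hd e he hc
    rw [List.mem_toFinset, List.mem_pmap] at hd he
    obtain ⟨p, hp, rfl⟩ := hd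
    obtain ⟨q, hq, rfl⟩ := he
    rcases eq_or_ne p q with rfl | hne
    · rcases hc with ⟨h1, _, _⟩ | ⟨h1, _, _⟩ <;> exact lt_irrefl _ h1
    · have hsym : Symmetric (fun p q : ℕ × ℕ => ¬ CrossP p q ∧ ¬ CrossP q p) :=
        fun a b hab => ⟨hab.2, hab.1⟩
      haveI : Std.Symm (fun p q : ℕ × ℕ => ¬ CrossP p q ∧ ¬ CrossP q p) := ⟨fun a b hab => hsym hab⟩
      have := (h.2.2.1.forall) hp hq hne
      rcases hc with hcr | hcr
      · exact this.1 hcr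
      · exact this.2 hcr
  card_eq := by
    have hnd : (l.pmap (fun p hp => (⟨p, hp⟩ : Diagonal 11)) h.2.1).Nodup :=
      h.2.2.2.1.pmap (fun a _ b _ hab => congrArg Subtype.val hab)
    rw [List.toFinset_card_of_nodup hnd, List.length_pmap, h.1]

lemma mem_triOfList {l : List (ℕ × ℕ)} (h : TriOK l) {p : ℕ × ℕ} (hp : p ∈ l) :
    (⟨p, h.2.1 p hp⟩ : Diagonal 11) ∈ (triOfList l h).diags := by
  rw [triOfList, List.mem_toFinset, List.mem_pmap]
  exact ⟨p, hp, rfl⟩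

def fanL : List (ℕ × ℕ) := [(1,3),(1,4),(1,5),(1,6),(1,7),(1,8),(1,9),(1,10),(1,11)]

lemma fanOK : TriOK fanL := by decide

def nextV (v : Fin 3) (b : Bool) : Fin 3 := if b then v + 1 else v + 2
def seqAux (v : Fin 3) : List Bool → List (Fin 3)
  | [] => [v]
  | b :: bs => v :: seqAux (nextV v b) bs
def decode : ℕ → ℕ → List Bool
  | 0, _ => []
  | k+1, n => (n % 2 == 1) :: decode k (n / 2)
def encode : List Bool → ℕ
  | [] => 0
  | b :: bs => (cond b 1 0) + 2 * encode bs

lemma decode_encode : ∀ bs : List Bool, decode bs.length (encode bs) = bs := by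
  intro bs
  induction bs with
  | nil => rfl
  | cons b t ih =>
    have h2 : (cond b 1 0 + 2 * encode t) % 2 = cond b 1 0 := by
      cases b <;> simp only [Bool.cond_true, Bool.cond_false] <;> omega
    have h3 : (cond b 1 0 + 2 * encode t) / 2 = encode t := by
      cases b <;> simp only [Bool.cond_true, Bool.cond_false] <;> omega
    simp only [List.length_cons, decode, encode, h2, h3, ih]
    cases b <;> simp

lemma encode_lt : ∀ bs : List Bool, encode bs < 2 ^ bs.length := by
  intro bs
  induction bs with
  | nil => decide
  | cons b t ih =>
    simp only [encode, List.length_cons, pow_succ]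
    cases b <;> simp <;> omega

lemma nextV_surj : ∀ v w : Fin 3, v ≠ w → ∃ b, w = nextV v b := by decide

def tc0 : List (List (Nat × Nat)) := [fanL,
fanL,
fanL,
[(1,10),(1,11),(2,4),(2,6),(2,7),(2,9),(2,10),(4,6),(7,9)],
fanL,
[(1,11),(2,11),(3,5),(3,10),(3,11),(5,7),(5,9),(5,10),(7,9)],
[(0,9),(1,9),(2,8),(2,9),(3,8),(4,6),(4,8),(6,8),(9,11)],
fanL,
fanL,
[(1,3),(1,10),(1,11),(3,6),(3,10),(4,6),(6,8),(6,10),(8,10)],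
[(0,6),(0,8),(0,9),(1,6),(2,6),(3,6),(4,6),(6,8),(9,11)],
fanL,
[(0,9),(1,4),(1,9),(2,4),(4,6),(4,8),(4,9),(6,8),(9,11)],
fanL,
fanL,
fanL,
fanL,
[(0,8),(0,9),(1,8),(2,4),(2,5),(2,6),(2,8),(6,8),(9,11)],
[(0,4),(1,4),(2,4),(4,10),(4,11),(5,7),(5,9),(5,10),(7,9)],
fanL,
[(0,2),(0,3),(0,4),(0,5),(0,6),(6,8),(6,10),(6,11),(8,10)],
fanL,
fanL,
fanL,
[(0,9),(1,7),(1,9),(2,5),(2,7),(3,5),(5,7),(7,9),(9,11)],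
fanL,
fanL,
fanL,
fanL,
fanL,
fanL,
[(1,3),(1,11),(3,5),(3,6),(3,8),(3,9),(3,11),(6,8),(9,11)]]
def tc1 : List (List (Nat × Nat)) := [fanL,
[(0,3),(0,6),(0,8),(0,9),(1,3),(3,5),(3,6),(6,8),(9,11)],
[(0,6),(1,4),(1,5),(1,6),(2,4),(6,8),(6,10),(6,11),(8,10)],
fanL,
[(0,2),(0,8),(0,9),(2,5),(2,8),(3,5),(5,8),(6,8),(9,11)],
fanL,
fanL,
fanL,
[(0,2),(2,8),(2,10),(2,11),(3,8),(4,8),(5,8),(6,8),(8,10)],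
fanL,
fanL,
fanL,
fanL,
fanL,
fanL,
[(0,2),(0,6),(0,8),(0,9),(2,4),(2,5),(2,6),(6,8),(9,11)],
[(0,9),(1,3),(1,6),(1,7),(1,9),(3,6),(4,6),(7,9),(9,11)],
fanL,
fanL,
fanL,
fanL,
fanL,
fanL,
[(1,10),(1,11),(2,9),(2,10),(3,9),(4,6),(4,7),(4,9),(7,9)],
fanL,
fanL,
fanL,
[(1,10),(1,11),(2,10),(3,10),(4,9),(4,10),(5,8),(5,9),(6,8)],
fanL,
[(1,11),(2,11),(3,5),(3,11),(5,8),(5,9),(5,11),(6,8),(9,11)],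
[(0,3),(0,4),(0,9),(1,3),(4,6),(4,7),(4,9),(7,9),(9,11)],
fanL]
def tc2 : List (List (Nat × Nat)) := [fanL,
[(0,3),(0,4),(0,8),(0,9),(1,3),(4,6),(4,7),(4,8),(9,11)],
[(0,9),(1,4),(1,5),(1,9),(2,4),(5,9),(6,9),(7,9),(9,11)],
fanL,
[(0,2),(2,10),(2,11),(3,10),(4,6),(4,7),(4,8),(4,10),(8,10)],
fanL,
fanL,
fanL,
[(0,2),(2,11),(3,6),(3,9),(3,11),(4,6),(6,9),(7,9),(9,11)],
fanL,
fanL,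
fanL,
fanL,
fanL,
fanL,
[(0,2),(0,4),(2,4),(4,6),(4,10),(4,11),(6,9),(6,10),(7,9)],
[(0,2),(0,6),(0,9),(2,4),(2,5),(2,6),(6,9),(7,9),(9,11)],
fanL,
fanL,
fanL,
fanL,
fanL,
fanL,
[(1,10),(1,11),(2,9),(2,10),(3,9),(4,9),(5,9),(6,9),(7,9)],
fanL,
fanL,
fanL,
[(0,2),(0,3),(0,8),(0,9),(3,5),(3,6),(3,7),(3,8),(9,11)],
fanL,
[(0,6),(0,9),(1,4),(1,5),(1,6),(2,4),(6,9),(7,9),(9,11)],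
[(0,3),(1,3),(3,5),(3,11),(5,9),(5,11),(6,9),(7,9),(9,11)],
fanL]
def tc3 : List (List (Nat × Nat)) := [[(0,9),(1,3),(1,9),(3,5),(3,6),(3,9),(6,9),(7,9),(9,11)],
fanL,
fanL,
fanL,
fanL,
fanL,
fanL,
[(0,4),(0,5),(1,3),(1,4),(5,7),(5,8),(5,10),(5,11),(8,10)],
fanL,
fanL,
fanL,
[(0,2),(0,9),(2,7),(2,9),(3,7),(4,7),(5,7),(7,9),(9,11)],
fanL,
[(1,11),(2,8),(2,9),(2,11),(3,7),(3,8),(4,7),(5,7),(9,11)],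
[(0,3),(0,4),(0,9),(1,3),(4,7),(4,9),(5,7),(7,9),(9,11)],
fanL,
fanL,
fanL,
fanL,
[(0,8),(0,9),(1,4),(1,6),(1,7),(1,8),(2,4),(4,6),(9,11)],
fanL,
[(1,6),(1,7),(1,8),(1,10),(1,11),(2,6),(3,6),(4,6),(8,10)],
[(0,9),(1,9),(2,8),(2,9),(3,6),(3,7),(3,8),(4,6),(9,11)],
fanL,
fanL,
[(1,3),(1,4),(1,6),(1,7),(1,11),(4,6),(7,9),(7,11),(9,11)],
[(0,9),(1,9),(2,5),(2,8),(2,9),(3,5),(5,7),(5,8),(9,11)],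
fanL,
[(0,2),(2,4),(2,8),(2,10),(2,11),(4,8),(5,7),(5,8),(8,10)],
fanL,
fanL,
fanL]
def tc4 : List (List (Nat × Nat)) := [fanL,
[(1,3),(1,5),(1,6),(1,10),(1,11),(3,5),(6,10),(7,10),(8,10)],
[(0,9),(1,4),(1,5),(1,9),(2,4),(5,7),(5,8),(5,9),(9,11)],
fanL,
[(0,2),(0,3),(0,7),(3,5),(3,7),(5,7),(7,10),(7,11),(8,10)],
fanL,
fanL,
fanL,
[(0,2),(0,6),(0,7),(0,8),(0,9),(2,6),(3,6),(4,6),(9,11)],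
fanL,
fanL,
fanL,
fanL,
fanL,
fanL,
[(0,8),(0,9),(1,3),(1,8),(3,6),(3,7),(3,8),(4,6),(9,11)],
[(0,2),(2,11),(3,7),(3,8),(3,9),(3,11),(4,7),(5,7),(9,11)],
fanL,
fanL,
fanL,
fanL,
fanL,
fanL,
[(1,3),(1,4),(1,5),(1,6),(1,10),(1,11),(6,10),(7,10),(8,10)],
fanL,
fanL,
fanL,
[(0,2),(0,7),(0,8),(0,9),(2,5),(2,7),(3,5),(5,7),(9,11)],
fanL,
[(0,8),(0,9),(1,8),(2,8),(3,5),(3,8),(5,7),(5,8),(9,11)],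
[(0,3),(1,3),(3,10),(3,11),(4,9),(4,10),(5,7),(5,8),(5,9)],
fanL]
def tc5 : List (List (Nat × Nat)) := [[(0,5),(1,3),(1,5),(3,5),(5,10),(5,11),(6,10),(7,10),(8,10)],
fanL,
fanL,
fanL,
fanL,
fanL,
fanL,
[(1,3),(1,11),(3,5),(3,11),(5,10),(5,11),(6,10),(7,10),(8,10)],
fanL,
fanL,
fanL,
[(0,2),(0,3),(0,4),(0,5),(0,6),(0,7),(0,8),(0,9),(9,11)],
fanL,
[(1,11),(2,4),(2,5),(2,6),(2,7),(2,8),(2,9),(2,11),(9,11)],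
[(0,3),(0,4),(0,5),(0,6),(0,7),(0,8),(0,9),(1,3),(9,11)],
fanL,
fanL,
fanL,
fanL,
[(0,2),(0,5),(0,6),(0,7),(0,8),(0,9),(2,4),(2,5),(9,11)],
fanL,
[(1,11),(2,11),(3,11),(4,11),(5,10),(5,11),(6,10),(7,10),(8,10)],
[(0,9),(1,3),(1,4),(1,9),(4,6),(4,7),(4,8),(4,9),(9,11)],
fanL,
fanL,
[(0,3),(0,5),(0,6),(0,7),(0,8),(0,9),(1,3),(3,5),(9,11)],
[(0,9),(1,9),(2,7),(2,8),(2,9),(3,7),(4,6),(4,7),(9,11)],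
fanL,
[(0,2),(2,10),(2,11),(3,9),(3,10),(4,6),(4,7),(4,8),(4,9)],
fanL,
fanL,
fanL]
def tc6 : List (List (Nat × Nat)) := [[(0,2),(2,11),(3,9),(3,11),(4,6),(4,9),(6,8),(6,9),(9,11)],
fanL,
fanL,
fanL,
fanL,
fanL,
fanL,
[(0,8),(0,9),(1,3),(1,4),(1,6),(1,8),(4,6),(6,8),(9,11)],
fanL,
fanL,
fanL,
[(0,2),(0,9),(2,6),(2,9),(3,6),(4,6),(6,8),(6,9),(9,11)],
fanL,
[(1,11),(2,8),(2,9),(2,11),(3,6),(3,8),(4,6),(6,8),(9,11)],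
[(0,7),(0,8),(0,9),(1,5),(1,6),(1,7),(2,4),(2,5),(9,11)],
fanL,
fanL,
fanL,
fanL,
[(0,2),(0,5),(2,4),(2,5),(5,8),(5,10),(5,11),(6,8),(8,10)],
fanL,
[(1,11),(2,8),(2,9),(2,11),(3,8),(4,8),(5,8),(6,8),(9,11)],
[(0,5),(1,3),(1,4),(1,5),(5,11),(6,8),(6,9),(6,11),(9,11)],
fanL,
fanL,
[(1,11),(2,5),(2,8),(2,9),(2,11),(3,5),(5,8),(6,8),(9,11)],
[(0,7),(1,5),(1,6),(1,7),(2,5),(3,5),(7,10),(7,11),(8,10)],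
fanL,
[(0,9),(1,4),(1,9),(2,4),(4,8),(4,9),(5,8),(6,8),(9,11)],
fanL,
fanL,
fanL]
def tc7 : List (List (Nat × Nat)) := [fanL,
fanL,
fanL,
[(0,2),(0,3),(3,11),(4,7),(4,11),(5,7),(7,10),(7,11),(8,10)],
fanL,
[(1,11),(2,11),(3,5),(3,6),(3,11),(6,11),(7,10),(7,11),(8,10)],
[(0,9),(1,3),(1,4),(1,9),(4,7),(4,8),(4,9),(5,7),(9,11)],
fanL,
fanL,
[(0,3),(0,9),(1,3),(3,9),(4,7),(4,8),(4,9),(5,7),(9,11)],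
[(0,9),(1,9),(2,7),(2,8),(2,9),(3,7),(4,7),(5,7),(9,11)],
fanL,
[(0,9),(1,4),(1,9),(2,4),(4,7),(4,8),(4,9),(5,7),(9,11)],
fanL,
fanL,
fanL,
fanL,
[(0,3),(0,4),(1,3),(4,6),(4,8),(4,10),(4,11),(6,8),(8,10)],
[(0,4),(0,5),(0,7),(1,4),(2,4),(5,7),(7,10),(7,11),(8,10)],
fanL,
[(0,2),(0,3),(0,4),(0,5),(0,9),(5,9),(6,8),(6,9),(9,11)],
fanL,
fanL,
fanL,
[(0,2),(0,5),(0,7),(2,5),(3,5),(5,7),(7,10),(7,11),(8,10)],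
fanL,
fanL,
fanL,
fanL,
fanL,
fanL,
[(0,8),(0,9),(1,6),(1,8),(2,4),(2,6),(4,6),(6,8),(9,11)]]
def tc8 : List (List (Nat × Nat)) := [fanL,
[(1,11),(2,4),(2,6),(2,7),(2,11),(4,6),(7,11),(8,11),(9,11)],
[(0,9),(1,9),(2,9),(3,5),(3,9),(5,9),(6,8),(6,9),(9,11)],
fanL,
[(0,2),(0,3),(0,9),(3,5),(3,7),(3,8),(3,9),(5,7),(9,11)],
fanL,
fanL,
fanL,
[(0,9),(1,3),(1,9),(3,6),(3,9),(4,6),(6,8),(6,9),(9,11)],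
fanL,
fanL,
fanL,
fanL,
fanL,
fanL,
[(0,2),(0,9),(2,4),(2,5),(2,7),(2,8),(2,9),(5,7),(9,11)],
[(0,2),(2,4),(2,10),(2,11),(4,7),(4,8),(4,9),(4,10),(5,7)],
fanL,
fanL,
fanL,
fanL,
fanL,
fanL,
[(1,3),(1,11),(3,9),(3,11),(4,7),(4,8),(4,9),(5,7),(9,11)],
fanL,
fanL,
fanL,
[(0,2),(0,3),(3,8),(3,11),(4,7),(4,8),(5,7),(8,11),(9,11)],
fanL,
[(1,11),(2,4),(2,9),(2,11),(4,7),(4,8),(4,9),(5,7),(9,11)],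
[(0,3),(0,6),(0,9),(1,3),(3,5),(3,6),(6,8),(6,9),(9,11)],
fanL]
def tc9 : List (List (Nat × Nat)) := [[(0,2),(2,11),(3,5),(3,6),(3,7),(3,11),(7,11),(8,11),(9,11)],
fanL,
fanL,
fanL,
fanL,
fanL,
fanL,
[(0,4),(0,5),(0,6),(0,9),(1,3),(1,4),(6,8),(6,9),(9,11)],
fanL,
fanL,
fanL,
[(0,2),(0,3),(0,4),(0,5),(0,6),(0,9),(6,8),(6,9),(9,11)],
fanL,
[(0,4),(0,9),(1,4),(2,4),(4,8),(4,9),(5,8),(6,8),(9,11)],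
[(0,5),(0,6),(0,7),(1,5),(2,4),(2,5),(7,11),(8,11),(9,11)],
fanL,
fanL,
fanL,
fanL,
[(1,10),(1,11),(2,4),(2,7),(2,8),(2,9),(2,10),(4,6),(4,7)],
fanL,
[(1,11),(2,11),(3,11),(4,11),(5,8),(5,11),(6,8),(8,11),(9,11)],
[(0,9),(1,3),(1,8),(1,9),(3,6),(3,8),(4,6),(6,8),(9,11)],
fanL,
fanL,
[(1,6),(1,8),(1,11),(2,5),(2,6),(3,5),(6,8),(8,11),(9,11)],
[(0,5),(1,5),(2,5),(3,5),(5,10),(5,11),(6,8),(6,9),(6,10)],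
fanL,
[(0,2),(2,4),(2,11),(4,6),(4,7),(4,11),(7,11),(8,11),(9,11)],
fanL,
fanL,
fanL]
def tc10 : List (List (Nat × Nat)) := [[(0,2),(0,4),(0,9),(2,4),(4,6),(4,7),(4,8),(4,9),(9,11)],
fanL,
fanL,
fanL,
fanL,
fanL,
fanL,
[(1,3),(1,4),(1,10),(1,11),(4,6),(4,7),(4,8),(4,9),(4,10)],
fanL,
fanL,
fanL,
[(0,2),(0,3),(0,4),(0,9),(4,6),(4,7),(4,8),(4,9),(9,11)],
fanL,
[(1,4),(1,8),(1,11),(2,4),(4,6),(4,7),(4,8),(8,11),(9,11)],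
[(0,7),(1,7),(2,4),(2,7),(4,6),(4,7),(7,11),(8,11),(9,11)],
fanL,
fanL,
fanL,
fanL,
[(1,10),(1,11),(2,4),(2,5),(2,6),(2,7),(2,8),(2,9),(2,10)],
fanL,
[(1,11),(2,11),(3,11),(4,11),(5,11),(6,11),(7,11),(8,11),(9,11)],
[(0,9),(1,3),(1,4),(1,5),(1,6),(1,7),(1,8),(1,9),(9,11)],
fanL,
fanL,
[(1,3),(1,8),(1,11),(3,5),(3,6),(3,7),(3,8),(8,11),(9,11)],
[(0,9),(1,5),(1,6),(1,7),(1,8),(1,9),(2,5),(3,5),(9,11)],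
fanL,
[(0,2),(0,3),(0,5),(3,5),(5,11),(6,11),(7,11),(8,11),(9,11)],
fanL,
fanL,
fanL]
def tc11 : List (List (Nat × Nat)) := [fanL,
fanL,
fanL,
[(1,4),(1,11),(2,4),(4,9),(4,11),(5,7),(5,8),(5,9),(9,11)],
fanL,
[(1,11),(2,5),(2,9),(2,11),(3,5),(5,7),(5,8),(5,9),(9,11)],
[(0,7),(1,3),(1,6),(1,7),(3,5),(3,6),(7,11),(8,11),(9,11)],
fanL,
fanL,
[(0,5),(0,9),(1,3),(1,4),(1,5),(5,7),(5,8),(5,9),(9,11)],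
[(0,7),(1,7),(2,7),(3,7),(4,7),(5,7),(7,11),(8,11),(9,11)],
fanL,
[(0,9),(1,4),(1,9),(2,4),(4,9),(5,7),(5,8),(5,9),(9,11)],
fanL,
fanL,
fanL,
fanL,
[(0,3),(0,4),(1,3),(4,10),(4,11),(5,7),(5,8),(5,9),(5,10)],
[(0,9),(1,4),(1,8),(1,9),(2,4),(4,8),(5,7),(5,8),(9,11)],
fanL,
[(0,9),(1,8),(1,9),(2,8),(3,8),(4,8),(5,7),(5,8),(9,11)],
fanL,
fanL,
fanL,
[(0,9),(1,3),(1,9),(3,5),(3,9),(5,7),(5,8),(5,9),(9,11)],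
fanL,
fanL,
fanL,
fanL,
fanL,
fanL,
[(0,5),(0,7),(1,3),(1,5),(3,5),(5,7),(7,11),(8,11),(9,11)]]
def tc12 : List (List (Nat × Nat)) := [[(0,2),(0,4),(0,5),(2,4),(5,7),(5,10),(5,11),(7,9),(7,10)],
fanL,
fanL,
fanL,
fanL,
fanL,
fanL,
[(1,3),(1,4),(1,6),(1,11),(4,6),(6,9),(6,11),(7,9),(9,11)],
fanL,
fanL,
fanL,
[(0,2),(0,3),(0,7),(0,9),(3,6),(3,7),(4,6),(7,9),(9,11)],
fanL,
[(0,4),(0,5),(0,7),(0,9),(1,4),(2,4),(5,7),(7,9),(9,11)],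
[(0,9),(1,3),(1,8),(1,9),(3,8),(4,8),(5,7),(5,8),(9,11)],
fanL,
fanL,
fanL,
fanL,
[(1,10),(1,11),(2,4),(2,5),(2,6),(2,9),(2,10),(6,9),(7,9)],
fanL,
[(1,11),(2,11),(3,7),(3,10),(3,11),(4,7),(5,7),(7,9),(7,10)],
[(0,5),(1,3),(1,4),(1,5),(5,11),(6,9),(6,11),(7,9),(9,11)],
fanL,
fanL,
[(1,11),(2,9),(2,11),(3,5),(3,8),(3,9),(5,7),(5,8),(9,11)],
[(0,5),(1,5),(2,5),(3,5),(5,11),(6,9),(6,11),(7,9),(9,11)],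
fanL,
[(0,2),(2,8),(2,11),(3,5),(3,8),(5,7),(5,8),(8,11),(9,11)],
fanL,
fanL,
fanL]
def tc13 : List (List (Nat × Nat)) := [fanL,
fanL,
fanL,
[(1,4),(1,11),(2,4),(4,9),(4,11),(5,9),(6,9),(7,9),(9,11)],
fanL,
[(0,7),(0,9),(1,7),(2,7),(3,5),(3,6),(3,7),(7,9),(9,11)],
[(0,3),(1,3),(3,5),(3,6),(3,7),(3,8),(3,11),(8,11),(9,11)],
fanL,
fanL,
[(1,3),(1,4),(1,5),(1,6),(1,7),(1,10),(1,11),(7,9),(7,10)],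
[(0,9),(1,9),(2,9),(3,9),(4,9),(5,9),(6,9),(7,9),(9,11)],
fanL,
[(0,2),(2,10),(2,11),(3,9),(3,10),(4,9),(5,9),(6,9),(7,9)],
fanL,
fanL,
fanL,
fanL,
[(0,3),(0,9),(1,3),(3,8),(3,9),(4,6),(4,7),(4,8),(9,11)],
[(0,9),(1,4),(1,6),(1,9),(2,4),(4,6),(6,9),(7,9),(9,11)],
fanL,
[(0,9),(1,8),(1,9),(2,6),(2,7),(2,8),(3,6),(4,6),(9,11)],
fanL,
fanL,
fanL,
[(0,2),(2,11),(3,7),(3,9),(3,11),(4,6),(4,7),(7,9),(9,11)],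
fanL,
fanL,
fanL,
fanL,
fanL,
fanL,
[(1,3),(1,7),(1,8),(1,11),(3,7),(4,6),(4,7),(8,11),(9,11)]]
def tc14 : List (List (Nat × Nat)) := [fanL,
fanL,
fanL,
[(0,2),(0,3),(3,11),(4,9),(4,11),(5,8),(5,9),(6,8),(9,11)],
fanL,
[(0,5),(0,6),(0,7),(0,9),(1,5),(2,5),(3,5),(7,9),(9,11)],
[(0,6),(1,6),(2,5),(2,6),(3,5),(6,10),(6,11),(7,9),(7,10)],
fanL,
fanL,
[(0,3),(0,6),(1,3),(3,6),(4,6),(6,10),(6,11),(7,9),(7,10)],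
[(0,6),(1,6),(2,6),(3,6),(4,6),(6,10),(6,11),(7,9),(7,10)],
fanL,
[(0,2),(0,3),(0,9),(3,6),(3,8),(3,9),(4,6),(6,8),(9,11)],
fanL,
fanL,
fanL,
fanL,
[(0,3),(0,4),(1,3),(4,10),(4,11),(5,10),(6,10),(7,9),(7,10)],
[(0,4),(0,5),(0,6),(1,4),(2,4),(6,10),(6,11),(7,9),(7,10)],
fanL,
[(0,2),(2,10),(2,11),(3,10),(4,10),(5,10),(6,10),(7,9),(7,10)],
fanL,
fanL,
fanL,
[(0,2),(2,5),(2,8),(2,11),(3,5),(5,8),(6,8),(8,11),(9,11)],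
fanL,
fanL,
fanL,
fanL,
fanL,
fanL,
[(1,3),(1,11),(3,5),(3,6),(3,7),(3,9),(3,11),(7,9),(9,11)]]
def tc15 : List (List (Nat × Nat)) := [fanL,
[(0,3),(0,4),(1,3),(4,11),(5,11),(6,8),(6,11),(8,11),(9,11)],
[(0,4),(1,4),(2,4),(4,7),(4,10),(4,11),(5,7),(7,9),(7,10)],
fanL,
[(0,2),(2,5),(2,11),(3,5),(5,7),(5,9),(5,11),(7,9),(9,11)],
fanL,
fanL,
fanL,
[(0,2),(2,7),(2,10),(2,11),(3,7),(4,7),(5,7),(7,9),(7,10)],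
fanL,
fanL,
fanL,
fanL,
fanL,
fanL,
[(1,3),(1,11),(3,11),(4,7),(4,10),(4,11),(5,7),(7,9),(7,10)],
[(0,9),(1,3),(1,9),(3,6),(3,7),(3,9),(4,6),(7,9),(9,11)],
fanL,
fanL,
fanL,
fanL,
fanL,
fanL,
[(1,3),(1,11),(3,9),(3,11),(4,6),(4,8),(4,9),(6,8),(9,11)],
fanL,
fanL,
fanL,
[(0,2),(0,3),(3,8),(3,11),(4,6),(4,8),(6,8),(8,11),(9,11)],
fanL,
[(1,11),(2,4),(2,9),(2,11),(4,9),(5,7),(5,9),(7,9),(9,11)],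
[(0,3),(1,3),(3,10),(3,11),(4,6),(4,10),(6,10),(7,9),(7,10)],
fanL]
def tc16 : List (List (Nat × Nat)) := [fanL,
[(1,11),(2,7),(2,11),(3,5),(3,7),(5,7),(7,9),(7,10),(7,11)],
[(0,7),(1,7),(2,7),(3,5),(3,7),(5,7),(7,9),(7,10),(7,11)],
fanL,
[(0,2),(0,3),(0,4),(4,6),(4,10),(4,11),(6,10),(7,9),(7,10)],
fanL,
fanL,
fanL,
[(0,7),(1,3),(1,7),(3,6),(3,7),(4,6),(7,9),(7,10),(7,11)],
fanL,
fanL,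
fanL,
fanL,
fanL,
fanL,
[(1,3),(1,6),(1,8),(1,9),(1,10),(1,11),(3,6),(4,6),(6,8)],
[(0,2),(2,4),(2,10),(2,11),(4,7),(4,10),(5,7),(7,9),(7,10)],
fanL,
fanL,
fanL,
fanL,
fanL,
fanL,
[(1,3),(1,4),(1,5),(1,6),(1,8),(1,9),(1,10),(1,11),(6,8)],
fanL,
fanL,
fanL,
[(0,6),(0,7),(1,5),(1,6),(2,5),(3,5),(7,9),(7,10),(7,11)],
fanL,
[(1,11),(2,6),(2,7),(2,11),(3,5),(3,6),(7,9),(7,10),(7,11)],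
[(0,3),(1,3),(3,5),(3,6),(3,10),(3,11),(6,10),(7,9),(7,10)],
fanL]
def tc17 : List (List (Nat × Nat)) := [[(0,2),(2,4),(2,8),(2,9),(2,10),(2,11),(4,8),(5,8),(6,8)],
fanL,
fanL,
fanL,
fanL,
fanL,
fanL,
[(0,2),(0,5),(2,5),(3,5),(5,8),(5,9),(5,10),(5,11),(6,8)],
fanL,
fanL,
fanL,
[(0,2),(0,3),(3,10),(3,11),(4,10),(5,10),(6,10),(7,9),(7,10)],
fanL,
[(1,11),(2,11),(3,10),(3,11),(4,10),(5,10),(6,10),(7,9),(7,10)],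
[(0,5),(1,5),(2,4),(2,5),(5,10),(5,11),(6,10),(7,9),(7,10)],
fanL,
fanL,
fanL,
fanL,
[(1,4),(1,11),(2,4),(4,11),(5,8),(5,9),(5,10),(5,11),(6,8)],
fanL,
[(1,9),(1,10),(1,11),(2,9),(3,9),(4,9),(5,8),(5,9),(6,8)],
[(0,3),(1,3),(3,6),(3,8),(3,9),(3,10),(3,11),(4,6),(6,8)],
fanL,
fanL,
[(1,9),(1,10),(1,11),(2,5),(2,6),(2,7),(2,9),(3,5),(7,9)],
[(0,7),(1,7),(2,7),(3,7),(4,6),(4,7),(7,9),(7,10),(7,11)],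
fanL,
[(0,7),(1,4),(1,7),(2,4),(4,6),(4,7),(7,9),(7,10),(7,11)],
fanL,
fanL,
fanL]
def tc18 : List (List (Nat × Nat)) := [[(0,2),(2,4),(2,8),(2,9),(2,10),(2,11),(4,6),(4,7),(4,8)],
fanL,
fanL,
fanL,
fanL,
fanL,
fanL,
[(1,10),(1,11),(2,7),(2,10),(3,7),(4,6),(4,7),(7,9),(7,10)],
fanL,
fanL,
fanL,
[(1,10),(1,11),(2,6),(2,7),(2,10),(3,6),(4,6),(7,9),(7,10)],
fanL,
[(1,11),(2,11),(3,6),(3,9),(3,10),(3,11),(4,6),(6,9),(7,9)],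
[(0,3),(0,4),(0,7),(1,3),(4,6),(4,7),(7,9),(7,10),(7,11)],
fanL,
fanL,
fanL,
fanL,
[(1,4),(1,9),(1,10),(1,11),(2,4),(4,9),(5,9),(6,9),(7,9)],
fanL,
[(1,11),(2,11),(3,11),(4,11),(5,9),(5,10),(5,11),(6,9),(7,9)],
[(0,3),(1,3),(3,11),(4,11),(5,9),(5,10),(5,11),(6,9),(7,9)],
fanL,
fanL,
[(1,3),(1,4),(1,11),(4,11),(5,9),(5,10),(5,11),(6,9),(7,9)],
[(0,7),(1,5),(1,6),(1,7),(2,5),(3,5),(7,9),(7,10),(7,11)],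
fanL,
[(0,2),(2,10),(2,11),(3,5),(3,6),(3,7),(3,10),(7,9),(7,10)],
fanL,
fanL,
fanL]
def tc19 : List (List (Nat × Nat)) := [fanL,
fanL,
fanL,
[(1,10),(1,11),(2,10),(3,9),(3,10),(4,7),(4,9),(5,7),(7,9)],
fanL,
[(1,9),(1,10),(1,11),(2,9),(3,9),(4,7),(4,9),(5,7),(7,9)],
[(0,7),(1,3),(1,6),(1,7),(3,5),(3,6),(7,9),(7,10),(7,11)],
fanL,
fanL,
[(1,3),(1,8),(1,9),(1,10),(1,11),(3,7),(3,8),(4,7),(5,7)],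
[(0,7),(1,7),(2,7),(3,7),(4,7),(5,7),(7,9),(7,10),(7,11)],
fanL,
[(0,2),(2,8),(2,9),(2,10),(2,11),(3,7),(3,8),(4,7),(5,7)],
fanL,
fanL,
fanL,
fanL,
[(0,5),(0,7),(1,5),(2,4),(2,5),(5,7),(7,9),(7,10),(7,11)],
[(0,4),(1,4),(2,4),(4,6),(4,9),(4,10),(4,11),(6,9),(7,9)],
fanL,
[(0,2),(2,8),(2,9),(2,10),(2,11),(3,8),(4,8),(5,7),(5,8)],
fanL,
fanL,
fanL,
[(0,4),(1,3),(1,4),(4,6),(4,9),(4,10),(4,11),(6,9),(7,9)],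
fanL,
fanL,
fanL,
fanL,
fanL,
fanL,
[(1,8),(1,9),(1,10),(1,11),(2,4),(2,8),(4,8),(5,7),(5,8)]]
def tc20 : List (List (Nat × Nat)) := [[(0,2),(2,11),(3,5),(3,11),(5,7),(5,8),(5,9),(5,10),(5,11)],
fanL,
fanL,
fanL,
fanL,
fanL,
fanL,
[(0,4),(0,5),(1,3),(1,4),(5,7),(5,8),(5,9),(5,10),(5,11)],
fanL,
fanL,
fanL,
[(1,10),(1,11),(2,10),(3,6),(3,7),(3,8),(3,9),(3,10),(4,6)],
fanL,
[(1,4),(1,10),(1,11),(2,4),(4,10),(5,7),(5,8),(5,9),(5,10)],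
[(0,3),(1,3),(3,8),(3,9),(3,10),(3,11),(4,8),(5,7),(5,8)],
fanL,
fanL,
fanL,
fanL,
[(1,6),(1,7),(1,8),(1,9),(1,10),(1,11),(2,4),(2,5),(2,6)],
fanL,
[(1,11),(2,11),(3,11),(4,11),(5,7),(5,8),(5,9),(5,10),(5,11)],
[(0,3),(1,3),(3,9),(3,10),(3,11),(4,9),(5,7),(5,8),(5,9)],
fanL,
fanL,
[(1,11),(2,5),(2,11),(3,5),(5,7),(5,8),(5,9),(5,10),(5,11)],
[(0,5),(1,5),(2,5),(3,5),(5,7),(5,8),(5,9),(5,10),(5,11)],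
fanL,
[(0,2),(2,8),(2,9),(2,10),(2,11),(3,5),(3,8),(5,7),(5,8)],
fanL,
fanL,
fanL]
def tc21 : List (List (Nat × Nat)) := [fanL,
fanL,
fanL,
[(1,4),(1,5),(1,6),(1,7),(1,8),(1,9),(1,10),(1,11),(2,4)],
fanL,
[(1,7),(1,8),(1,9),(1,10),(1,11),(2,7),(3,5),(3,6),(3,7)],
[(0,3),(1,3),(3,5),(3,6),(3,7),(3,8),(3,9),(3,10),(3,11)],
fanL,
fanL,
[(1,3),(1,4),(1,5),(1,6),(1,7),(1,8),(1,9),(1,10),(1,11)],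
fanL,
fanL,
[(0,2),(2,4),(2,5),(2,6),(2,7),(2,8),(2,9),(2,10),(2,11)],
fanL,
fanL,
fanL,
fanL,
[(1,9),(1,10),(1,11),(2,4),(2,9),(4,6),(4,7),(4,8),(4,9)],
[(0,4),(1,4),(2,4),(4,6),(4,7),(4,8),(4,9),(4,10),(4,11)],
fanL,
[(0,2),(2,8),(2,9),(2,10),(2,11),(3,8),(4,6),(4,7),(4,8)],
fanL,
fanL,
fanL,
[(0,2),(2,7),(2,8),(2,9),(2,10),(2,11),(3,7),(4,6),(4,7)],
fanL,
fanL,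
fanL,
fanL,
fanL,
fanL,
[(1,10),(1,11),(2,4),(2,10),(4,6),(4,7),(4,8),(4,9),(4,10)]]
def tc22 : List (List (Nat × Nat)) := [fanL,
fanL,
fanL,
[(1,10),(1,11),(2,10),(3,5),(3,8),(3,9),(3,10),(5,8),(6,8)],
fanL,
[(1,11),(2,11),(3,7),(3,8),(3,9),(3,10),(3,11),(4,6),(4,7)],
[(0,3),(1,3),(3,5),(3,8),(3,9),(3,10),(3,11),(5,8),(6,8)],
fanL,
fanL,
[(1,9),(1,10),(1,11),(2,6),(2,9),(3,6),(4,6),(6,8),(6,9)],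
[(0,6),(1,6),(2,6),(3,6),(4,6),(6,8),(6,9),(6,10),(6,11)],
fanL,
[(0,2),(2,4),(2,11),(4,6),(4,11),(6,8),(6,9),(6,10),(6,11)],
fanL,
fanL,
fanL,
fanL,
[(1,11),(2,4),(2,11),(4,10),(4,11),(5,10),(6,8),(6,9),(6,10)],
[(0,4),(0,5),(0,6),(1,4),(2,4),(6,8),(6,9),(6,10),(6,11)],
fanL,
[(0,2),(2,10),(2,11),(3,10),(4,8),(4,9),(4,10),(5,8),(6,8)],
fanL,
fanL,
fanL,
[(0,2),(2,11),(3,11),(4,10),(4,11),(5,10),(6,8),(6,9),(6,10)],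
fanL,
fanL,
fanL,
fanL,
fanL,
fanL,
[(1,3),(1,11),(3,11),(4,8),(4,9),(4,10),(4,11),(5,8),(6,8)]]
def tc23 : List (List (Nat × Nat)) := [fanL,
[(1,11),(2,4),(2,11),(4,11),(5,11),(6,8),(6,9),(6,10),(6,11)],
[(0,4),(1,4),(2,4),(4,11),(5,11),(6,8),(6,9),(6,10),(6,11)],
fanL,
[(0,2),(0,3),(0,4),(4,11),(5,11),(6,8),(6,9),(6,10),(6,11)],
fanL,
fanL,
fanL,
[(0,2),(2,11),(3,11),(4,7),(4,8),(4,9),(4,10),(4,11),(5,7)],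
fanL,
fanL,
fanL,
fanL,
fanL,
fanL,
[(1,3),(1,11),(3,11),(4,9),(4,10),(4,11),(5,9),(6,8),(6,9)],
[(0,2),(2,11),(3,6),(3,11),(4,6),(6,8),(6,9),(6,10),(6,11)],
fanL,
fanL,
fanL,
fanL,
fanL,
fanL,
[(1,8),(1,9),(1,10),(1,11),(2,6),(2,8),(3,6),(4,6),(6,8)],
fanL,
fanL,
fanL,
[(0,2),(0,3),(3,10),(3,11),(4,6),(4,10),(6,8),(6,9),(6,10)],
fanL,
[(1,9),(1,10),(1,11),(2,9),(3,5),(3,7),(3,8),(3,9),(5,7)],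
[(0,3),(0,4),(0,6),(1,3),(4,6),(6,8),(6,9),(6,10),(6,11)],
fanL]
def tc24 : List (List (Nat × Nat)) := [[(0,2),(2,4),(2,10),(2,11),(4,10),(5,9),(5,10),(6,8),(6,9)],
fanL,
fanL,
fanL,
fanL,
fanL,
fanL,
[(0,2),(0,5),(2,5),(3,5),(5,7),(5,10),(5,11),(7,10),(8,10)],
fanL,
fanL,
fanL,
[(1,6),(1,7),(1,10),(1,11),(2,6),(3,6),(4,6),(7,10),(8,10)],
fanL,
[(1,11),(2,11),(3,10),(3,11),(4,6),(4,8),(4,10),(6,8),(8,10)],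
[(0,3),(1,3),(3,10),(3,11),(4,10),(5,9),(5,10),(6,8),(6,9)],
fanL,
fanL,
fanL,
fanL,
[(1,4),(1,11),(2,4),(4,11),(5,11),(6,8),(6,11),(8,10),(8,11)],
fanL,
[(1,11),(2,11),(3,7),(3,10),(3,11),(4,7),(5,7),(7,10),(8,10)],
[(0,3),(1,3),(3,9),(3,10),(3,11),(4,9),(5,9),(6,8),(6,9)],
fanL,
fanL,
[(1,3),(1,6),(1,11),(3,5),(3,6),(6,8),(6,11),(8,10),(8,11)],
[(0,8),(1,8),(2,8),(3,5),(3,6),(3,8),(6,8),(8,10),(8,11)],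
fanL,
[(0,2),(2,4),(2,9),(2,10),(2,11),(4,7),(4,8),(4,9),(5,7)],
fanL,
fanL,
fanL]
def tc25 : List (List (Nat × Nat)) := [fanL,
fanL,
fanL,
[(1,6),(1,7),(1,10),(1,11),(2,6),(3,5),(3,6),(7,10),(8,10)],
fanL,
[(1,7),(1,10),(1,11),(2,7),(3,5),(3,6),(3,7),(7,10),(8,10)],
[(0,3),(1,3),(3,5),(3,6),(3,7),(3,10),(3,11),(7,10),(8,10)],
fanL,
fanL,
[(1,3),(1,4),(1,5),(1,10),(1,11),(5,8),(5,10),(6,8),(8,10)],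
[(0,8),(1,8),(2,8),(3,8),(4,8),(5,8),(6,8),(8,10),(8,11)],
fanL,
[(0,2),(2,4),(2,11),(4,8),(4,11),(5,8),(6,8),(8,10),(8,11)],
fanL,
fanL,
fanL,
fanL,
[(1,11),(2,4),(2,5),(2,8),(2,11),(5,8),(6,8),(8,10),(8,11)],
[(0,8),(1,8),(2,8),(3,6),(3,8),(4,6),(6,8),(8,10),(8,11)],
fanL,
[(0,2),(0,3),(0,8),(3,6),(3,8),(4,6),(6,8),(8,10),(8,11)],
fanL,
fanL,
fanL,
[(0,2),(2,5),(2,6),(2,7),(2,10),(2,11),(3,5),(7,10),(8,10)],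
fanL,
fanL,
fanL,
fanL,
fanL,
fanL,
[(1,3),(1,11),(3,7),(3,8),(3,11),(4,6),(4,7),(8,10),(8,11)]]
def tc26 : List (List (Nat × Nat)) := [fanL,
fanL,
fanL,
[(0,2),(0,3),(3,7),(3,10),(3,11),(4,6),(4,7),(7,10),(8,10)],
fanL,
[(1,7),(1,10),(1,11),(2,7),(3,7),(4,6),(4,7),(7,10),(8,10)],
[(0,6),(1,6),(2,5),(2,6),(3,5),(6,10),(6,11),(7,10),(8,10)],
fanL,
fanL,
[(0,3),(0,6),(1,3),(3,6),(4,6),(6,10),(6,11),(7,10),(8,10)],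
[(0,8),(1,8),(2,6),(2,7),(2,8),(3,6),(4,6),(8,10),(8,11)],
fanL,
[(0,2),(2,4),(2,7),(2,10),(2,11),(4,6),(4,7),(7,10),(8,10)],
fanL,
fanL,
fanL,
fanL,
[(1,11),(2,4),(2,5),(2,6),(2,7),(2,8),(2,11),(8,10),(8,11)],
[(0,4),(0,5),(0,6),(0,7),(0,8),(1,4),(2,4),(8,10),(8,11)],
fanL,
[(0,2),(2,10),(2,11),(3,10),(4,10),(5,10),(6,10),(7,10),(8,10)],
fanL,
fanL,
fanL,
[(0,2),(2,11),(3,5),(3,6),(3,7),(3,8),(3,11),(8,10),(8,11)],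
fanL,
fanL,
fanL,
fanL,
fanL,
fanL,
[(1,3),(1,9),(1,10),(1,11),(3,5),(3,6),(3,7),(3,8),(3,9)]]
def tc27 : List (List (Nat × Nat)) := [fanL,
[(1,11),(2,6),(2,11),(3,5),(3,6),(6,10),(6,11),(7,10),(8,10)],
[(0,4),(1,4),(2,4),(4,9),(4,10),(4,11),(5,7),(5,8),(5,9)],
fanL,
[(0,2),(2,10),(2,11),(3,10),(4,9),(4,10),(5,7),(5,8),(5,9)],
fanL,
fanL,
fanL,
[(0,2),(2,7),(2,10),(2,11),(3,7),(4,7),(5,7),(7,10),(8,10)],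
fanL,
fanL,
fanL,
fanL,
fanL,
fanL,
[(1,3),(1,11),(3,11),(4,9),(4,10),(4,11),(5,7),(5,8),(5,9)],
[(0,2),(2,9),(2,10),(2,11),(3,8),(3,9),(4,8),(5,7),(5,8)],
fanL,
fanL,
fanL,
fanL,
fanL,
fanL,
[(1,3),(1,4),(1,10),(1,11),(4,8),(4,10),(5,7),(5,8),(8,10)],
fanL,
fanL,
fanL,
[(1,5),(1,11),(2,5),(3,5),(5,11),(6,10),(6,11),(7,10),(8,10)],
fanL,
[(1,11),(2,11),(3,5),(3,9),(3,10),(3,11),(5,7),(5,8),(5,9)],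
[(0,3),(1,3),(3,5),(3,7),(3,10),(3,11),(5,7),(7,10),(8,10)],
fanL]
def tc28 : List (List (Nat × Nat)) := [fanL,
fanL,
fanL,
[(1,10),(1,11),(2,4),(2,6),(2,7),(2,8),(2,10),(4,6),(8,10)],
fanL,
[(1,11),(2,5),(2,8),(2,11),(3,5),(5,7),(5,8),(8,10),(8,11)],
[(0,3),(1,3),(3,5),(3,7),(3,11),(5,7),(7,11),(8,10),(8,11)],
fanL,
fanL,
[(1,3),(1,10),(1,11),(3,8),(3,10),(4,8),(5,7),(5,8),(8,10)],
[(0,8),(1,8),(2,8),(3,8),(4,8),(5,7),(5,8),(8,10),(8,11)],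
fanL,
[(0,8),(1,7),(1,8),(2,4),(2,5),(2,7),(5,7),(8,10),(8,11)],
fanL,
fanL,
fanL,
fanL,
[(0,5),(0,8),(1,5),(2,4),(2,5),(5,7),(5,8),(8,10),(8,11)],
[(0,8),(1,6),(1,7),(1,8),(2,4),(2,5),(2,6),(8,10),(8,11)],
fanL,
[(0,2),(0,3),(0,8),(3,7),(3,8),(4,7),(5,7),(8,10),(8,11)],
fanL,
fanL,
fanL,
[(0,4),(0,5),(0,6),(1,3),(1,4),(6,11),(7,11),(8,10),(8,11)],
fanL,
fanL,
fanL,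
fanL,
fanL,
fanL,
[(0,2),(0,4),(2,4),(4,7),(4,11),(5,7),(7,11),(8,10),(8,11)]]
def tc29 : List (List (Nat × Nat)) := [fanL,
[(1,9),(1,10),(1,11),(2,6),(2,9),(3,5),(3,6),(6,9),(7,9)],
[(0,6),(1,4),(1,5),(1,6),(2,4),(6,11),(7,11),(8,10),(8,11)],
fanL,
[(0,2),(0,3),(0,4),(4,9),(4,10),(4,11),(5,9),(6,9),(7,9)],
fanL,
fanL,
fanL,
[(0,4),(1,3),(1,4),(4,11),(5,11),(6,9),(6,10),(6,11),(7,9)],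
fanL,
fanL,
fanL,
fanL,
fanL,
fanL,
[(1,7),(1,9),(1,10),(1,11),(2,4),(2,5),(2,6),(2,7),(7,9)],
[(0,2),(2,4),(2,7),(2,11),(4,6),(4,7),(7,11),(8,10),(8,11)],
fanL,
fanL,
fanL,
fanL,
fanL,
fanL,
[(0,4),(0,6),(1,3),(1,4),(4,6),(6,9),(6,10),(6,11),(7,9)],
fanL,
fanL,
fanL,
[(1,7),(1,11),(2,7),(3,7),(4,6),(4,7),(7,11),(8,10),(8,11)],
fanL,
[(1,11),(2,11),(3,10),(3,11),(4,6),(4,7),(4,8),(4,10),(8,10)],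
[(0,3),(1,3),(3,10),(3,11),(4,6),(4,10),(6,9),(6,10),(7,9)],
fanL]
def tc30 : List (List (Nat × Nat)) := [fanL,
[(1,6),(1,7),(1,11),(2,4),(2,6),(4,6),(7,11),(8,10),(8,11)],
[(0,8),(1,4),(1,5),(1,8),(2,4),(5,8),(6,8),(8,10),(8,11)],
fanL,
[(0,2),(0,6),(0,8),(2,5),(2,6),(3,5),(6,8),(8,10),(8,11)],
fanL,
fanL,
fanL,
[(0,2),(2,11),(3,6),(3,8),(3,11),(4,6),(6,8),(8,10),(8,11)],
fanL,
fanL,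
fanL,
fanL,
fanL,
fanL,
[(1,10),(1,11),(2,4),(2,10),(4,9),(4,10),(5,8),(5,9),(6,8)],
[(0,2),(2,4),(2,5),(2,6),(2,7),(2,9),(2,10),(2,11),(7,9)],
fanL,
fanL,
fanL,
fanL,
fanL,
fanL,
[(1,3),(1,4),(1,5),(1,11),(5,8),(5,11),(6,8),(8,10),(8,11)],
fanL,
fanL,
fanL,
[(1,10),(1,11),(2,10),(3,5),(3,9),(3,10),(5,8),(5,9),(6,8)],
fanL,
[(0,6),(0,8),(1,6),(2,6),(3,5),(3,6),(6,8),(8,10),(8,11)],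
[(0,3),(0,6),(0,8),(1,3),(3,5),(3,6),(6,8),(8,10),(8,11)],
fanL]
def tc31 : List (List (Nat × Nat)) := [[(0,8),(1,7),(1,8),(2,6),(2,7),(3,5),(3,6),(8,10),(8,11)],
fanL,
fanL,
fanL,
fanL,
fanL,
fanL,
[(0,4),(0,8),(1,3),(1,4),(4,7),(4,8),(5,7),(8,10),(8,11)],
fanL,
fanL,
fanL,
[(0,2),(0,3),(0,4),(0,5),(0,6),(0,8),(6,8),(8,10),(8,11)],
fanL,
[(1,6),(1,7),(1,11),(2,4),(2,5),(2,6),(7,11),(8,10),(8,11)],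
[(0,8),(1,5),(1,7),(1,8),(2,4),(2,5),(5,7),(8,10),(8,11)],
fanL,
fanL,
fanL,
fanL,
[(0,2),(0,5),(0,6),(0,8),(2,4),(2,5),(6,8),(8,10),(8,11)],
fanL,
[(1,11),(2,11),(3,6),(3,7),(3,9),(3,10),(3,11),(4,6),(7,9)],
[(0,3),(1,3),(3,6),(3,10),(3,11),(4,6),(6,8),(6,10),(8,10)],
fanL,
fanL,
[(0,3),(0,5),(0,6),(0,8),(1,3),(3,5),(6,8),(8,10),(8,11)],
[(0,8),(1,5),(1,7),(1,8),(2,5),(3,5),(5,7),(8,10),(8,11)],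
fanL,
[(0,2),(2,10),(2,11),(3,5),(3,10),(5,7),(5,9),(5,10),(7,9)],
fanL,
fanL,
fanL]
def tc32 : List (List (Nat × Nat)) := [fanL,
[(0,3),(0,10),(1,3),(3,8),(3,10),(4,6),(4,8),(6,8),(8,10)],
[(0,4),(1,4),(2,4),(4,11),(5,7),(5,9),(5,10),(5,11),(7,9)],
fanL,
[(0,2),(2,5),(2,11),(3,5),(5,7),(5,11),(7,11),(8,10),(8,11)],
fanL,
fanL,
fanL,
[(0,2),(2,11),(3,6),(3,10),(3,11),(4,6),(6,8),(6,10),(8,10)],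
fanL,
fanL,
fanL,
fanL,
fanL,
fanL,
[(1,3),(1,11),(3,11),(4,11),(5,10),(5,11),(6,8),(6,10),(8,10)],
[(0,2),(2,11),(3,7),(3,9),(3,10),(3,11),(4,7),(5,7),(7,9)],
fanL,
fanL,
fanL,
fanL,
fanL,
fanL,
[(0,2),(0,10),(2,7),(2,8),(2,10),(3,7),(4,7),(5,7),(8,10)],
fanL,
fanL,
fanL,
[(0,2),(0,3),(0,4),(0,10),(4,7),(4,8),(4,10),(5,7),(8,10)],
fanL,
[(1,11),(2,4),(2,10),(2,11),(4,10),(5,10),(6,8),(6,10),(8,10)],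
[(0,3),(1,3),(3,5),(3,6),(3,8),(3,11),(6,8),(8,10),(8,11)],
fanL]
def tc33 : List (List (Nat × Nat)) := [[(0,2),(2,11),(3,5),(3,6),(3,7),(3,11),(7,11),(8,10),(8,11)],
fanL,
fanL,
fanL,
fanL,
fanL,
fanL,
[(0,6),(0,10),(1,3),(1,6),(3,5),(3,6),(6,8),(6,10),(8,10)],
fanL,
fanL,
fanL,
[(0,2),(0,3),(3,8),(3,11),(4,8),(5,8),(6,8),(8,10),(8,11)],
fanL,
[(0,9),(0,10),(1,9),(2,4),(2,5),(2,9),(5,8),(5,9),(6,8)],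
[(0,3),(0,4),(0,10),(1,3),(4,8),(4,10),(5,8),(6,8),(8,10)],
fanL,
fanL,
fanL,
fanL,
[(1,4),(1,6),(1,8),(1,11),(2,4),(4,6),(6,8),(8,10),(8,11)],
fanL,
[(1,11),(2,9),(2,10),(2,11),(3,9),(4,6),(4,7),(4,9),(7,9)],
[(0,10),(1,3),(1,4),(1,10),(4,9),(4,10),(5,8),(5,9),(6,8)],
fanL,
fanL,
[(1,3),(1,8),(1,11),(3,7),(3,8),(4,6),(4,7),(8,10),(8,11)],
[(0,5),(0,6),(0,10),(1,5),(2,5),(3,5),(6,8),(6,10),(8,10)],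
fanL,
[(0,10),(1,8),(1,10),(2,4),(2,6),(2,8),(4,6),(6,8),(8,10)],
fanL,
fanL,
fanL]
def tc34 : List (List (Nat × Nat)) := [[(0,2),(2,11),(3,7),(3,9),(3,10),(3,11),(4,6),(4,7),(7,9)],
fanL,
fanL,
fanL,
fanL,
fanL,
fanL,
[(1,3),(1,11),(3,10),(3,11),(4,6),(4,7),(4,8),(4,10),(8,10)],
fanL,
fanL,
fanL,
[(0,2),(0,3),(0,4),(0,5),(0,9),(0,10),(5,9),(6,9),(7,9)],
fanL,
[(1,11),(2,4),(2,10),(2,11),(4,6),(4,7),(4,8),(4,10),(8,10)],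
[(0,10),(1,5),(1,6),(1,7),(1,8),(1,10),(2,4),(2,5),(8,10)],
fanL,
fanL,
fanL,
fanL,
[(0,2),(0,10),(2,4),(2,10),(4,9),(4,10),(5,9),(6,9),(7,9)],
fanL,
[(0,9),(0,10),(1,9),(2,9),(3,9),(4,9),(5,9),(6,9),(7,9)],
[(0,3),(0,9),(0,10),(1,3),(3,9),(4,9),(5,9),(6,9),(7,9)],
fanL,
fanL,
[(0,3),(0,10),(1,3),(3,5),(3,6),(3,10),(6,9),(6,10),(7,9)],
[(0,5),(0,9),(0,10),(1,5),(2,5),(3,5),(5,9),(6,9),(7,9)],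
fanL,
[(0,2),(0,3),(0,5),(3,5),(5,11),(6,9),(6,10),(6,11),(7,9)],
fanL,
fanL,
fanL]
def tc35 : List (List (Nat × Nat)) := [fanL,
fanL,
fanL,
[(0,2),(0,10),(2,4),(2,7),(2,8),(2,10),(4,7),(5,7),(8,10)],
fanL,
[(1,11),(2,5),(2,10),(2,11),(3,5),(5,7),(5,8),(5,10),(8,10)],
[(0,10),(1,3),(1,6),(1,10),(3,5),(3,6),(6,9),(6,10),(7,9)],
fanL,
fanL,
[(1,3),(1,4),(1,5),(1,6),(1,11),(6,11),(7,11),(8,10),(8,11)],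
[(0,7),(0,9),(0,10),(1,7),(2,7),(3,7),(4,7),(5,7),(7,9)],
fanL,
[(0,2),(0,5),(0,7),(2,4),(2,5),(5,7),(7,11),(8,10),(8,11)],
fanL,
fanL,
fanL,
fanL,
[(1,11),(2,4),(2,11),(4,6),(4,11),(6,9),(6,10),(6,11),(7,9)],
[(0,4),(0,9),(0,10),(1,4),(2,4),(4,8),(4,9),(5,7),(5,8)],
fanL,
[(0,2),(0,9),(0,10),(2,8),(2,9),(3,8),(4,8),(5,7),(5,8)],
fanL,
fanL,
fanL,
[(0,10),(1,3),(1,4),(1,8),(1,10),(4,8),(5,7),(5,8),(8,10)],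
fanL,
fanL,
fanL,
fanL,
fanL,
fanL,
[(0,5),(0,10),(1,3),(1,5),(3,5),(5,7),(5,8),(5,10),(8,10)]]
def tc36 : List (List (Nat × Nat)) := [[(0,2),(0,4),(0,5),(2,4),(5,7),(5,8),(5,11),(8,10),(8,11)],
fanL,
fanL,
fanL,
fanL,
fanL,
fanL,
[(1,3),(1,7),(1,8),(1,11),(3,5),(3,7),(5,7),(8,10),(8,11)],
fanL,
fanL,
fanL,
[(0,2),(0,3),(0,4),(0,5),(5,11),(6,10),(6,11),(7,10),(8,10)],
fanL,
[(1,7),(1,8),(1,11),(2,4),(2,5),(2,7),(5,7),(8,10),(8,11)],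
[(0,3),(0,4),(0,5),(0,7),(0,10),(1,3),(5,7),(7,10),(8,10)],
fanL,
fanL,
fanL,
fanL,
[(1,4),(1,11),(2,4),(4,11),(5,11),(6,10),(6,11),(7,10),(8,10)],
fanL,
[(1,11),(2,11),(3,11),(4,7),(4,10),(4,11),(5,7),(7,10),(8,10)],
[(0,10),(1,3),(1,4),(1,5),(1,6),(1,10),(6,10),(7,10),(8,10)],
fanL,
fanL,
[(0,9),(0,10),(1,3),(1,4),(1,9),(4,9),(5,7),(5,8),(5,9)],
[(0,10),(1,10),(2,10),(3,5),(3,6),(3,10),(6,10),(7,10),(8,10)],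
fanL,
[(0,10),(1,4),(1,10),(2,4),(4,9),(4,10),(5,7),(5,8),(5,9)],
fanL,
fanL,
fanL]
def tc37 : List (List (Nat × Nat)) := [fanL,
fanL,
fanL,
[(1,6),(1,7),(1,8),(1,11),(2,6),(3,5),(3,6),(8,10),(8,11)],
fanL,
[(1,11),(2,11),(3,11),(4,10),(4,11),(5,10),(6,10),(7,10),(8,10)],
[(0,10),(1,10),(2,7),(2,10),(3,5),(3,6),(3,7),(7,10),(8,10)],
fanL,
fanL,
[(0,3),(0,10),(1,3),(3,10),(4,10),(5,10),(6,10),(7,10),(8,10)],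
[(0,10),(1,10),(2,10),(3,10),(4,10),(5,10),(6,10),(7,10),(8,10)],
fanL,
[(0,2),(0,7),(0,10),(2,4),(2,5),(2,6),(2,7),(7,10),(8,10)],
fanL,
fanL,
fanL,
fanL,
[(0,3),(0,4),(1,3),(4,6),(4,11),(6,10),(6,11),(7,10),(8,10)],
[(0,4),(0,5),(0,10),(1,4),(2,4),(5,10),(6,10),(7,10),(8,10)],
fanL,
[(0,10),(1,8),(1,10),(2,6),(2,7),(2,8),(3,6),(4,6),(8,10)],
fanL,
fanL,
fanL,
[(0,4),(0,7),(0,10),(1,3),(1,4),(4,6),(4,7),(7,10),(8,10)],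
fanL,
fanL,
fanL,
fanL,
fanL,
fanL,
[(0,5),(0,10),(1,3),(1,5),(3,5),(5,10),(6,10),(7,10),(8,10)]]
def tc38 : List (List (Nat × Nat)) := [fanL,
fanL,
fanL,
[(1,8),(1,11),(2,8),(3,7),(3,8),(4,6),(4,7),(8,10),(8,11)],
fanL,
[(0,9),(0,10),(1,7),(1,8),(1,9),(2,5),(2,6),(2,7),(3,5)],
[(0,3),(0,9),(0,10),(1,3),(3,5),(3,8),(3,9),(5,8),(6,8)],
fanL,
fanL,
[(1,11),(2,6),(2,9),(2,10),(2,11),(3,6),(4,6),(6,8),(6,9)],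
[(0,10),(1,10),(2,6),(2,7),(2,10),(3,6),(4,6),(7,10),(8,10)],
fanL,
[(0,6),(1,4),(1,6),(2,4),(4,6),(6,8),(6,11),(8,10),(8,11)],
fanL,
fanL,
fanL,
fanL,
[(0,9),(0,10),(1,5),(1,8),(1,9),(2,4),(2,5),(5,8),(6,8)],
[(0,6),(0,9),(0,10),(1,6),(2,4),(2,5),(2,6),(6,8),(6,9)],
fanL,
[(0,10),(1,8),(1,10),(2,8),(3,8),(4,8),(5,8),(6,8),(8,10)],
fanL,
fanL,
fanL,
[(0,2),(0,9),(0,10),(2,9),(3,5),(3,6),(3,9),(6,8),(6,9)],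
fanL,
fanL,
fanL,
fanL,
fanL,
fanL,
[(1,3),(1,11),(3,11),(4,8),(4,11),(5,8),(6,8),(8,10),(8,11)]]
def tc39 : List (List (Nat × Nat)) := [fanL,
[(1,11),(2,4),(2,11),(4,11),(5,7),(5,10),(5,11),(7,10),(8,10)],
[(0,4),(0,9),(0,10),(1,4),(2,4),(4,9),(5,9),(6,8),(6,9)],
fanL,
[(0,2),(0,7),(0,10),(2,5),(2,7),(3,5),(5,7),(7,10),(8,10)],
fanL,
fanL,
fanL,
[(0,2),(2,11),(3,11),(4,7),(4,8),(4,11),(5,7),(8,10),(8,11)],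
fanL,
fanL,
fanL,
fanL,
fanL,
fanL,
[(0,9),(0,10),(1,5),(1,7),(1,8),(1,9),(2,4),(2,5),(5,7)],
[(0,6),(1,5),(1,6),(2,4),(2,5),(6,8),(6,11),(8,10),(8,11)],
fanL,
fanL,
fanL,
fanL,
fanL,
fanL,
[(0,9),(0,10),(1,8),(1,9),(2,6),(2,8),(3,6),(4,6),(6,8)],
fanL,
fanL,
fanL,
[(0,9),(0,10),(1,8),(1,9),(2,8),(3,5),(3,7),(3,8),(5,7)],
fanL,
[(0,4),(0,6),(0,7),(0,10),(1,4),(2,4),(4,6),(7,10),(8,10)],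
[(0,10),(1,3),(1,8),(1,10),(3,5),(3,7),(3,8),(5,7),(8,10)],
fanL]
def tc40 : List (List (Nat × Nat)) := [[(0,10),(1,3),(1,10),(3,5),(3,7),(3,8),(3,9),(3,10),(5,7)],
fanL,
fanL,
fanL,
fanL,
fanL,
fanL,
[(1,3),(1,11),(3,5),(3,7),(3,8),(3,9),(3,10),(3,11),(5,7)],
fanL,
fanL,
fanL,
[(0,2),(0,3),(0,7),(0,8),(0,9),(0,10),(3,6),(3,7),(4,6)],
fanL,
[(1,11),(2,4),(2,8),(2,9),(2,10),(2,11),(4,6),(4,8),(6,8)],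
[(0,8),(0,9),(0,10),(1,3),(1,6),(1,8),(3,6),(4,6),(6,8)],
fanL,
fanL,
fanL,
fanL,
[(0,2),(0,10),(2,4),(2,10),(4,9),(4,10),(5,9),(6,8),(6,9)],
fanL,
[(1,11),(2,7),(2,8),(2,9),(2,10),(2,11),(3,7),(4,7),(5,7)],
[(0,3),(1,3),(3,11),(4,7),(4,8),(4,9),(4,10),(4,11),(5,7)],
fanL,
fanL,
[(1,3),(1,6),(1,11),(3,5),(3,6),(6,8),(6,9),(6,10),(6,11)],
[(0,5),(0,9),(0,10),(1,5),(2,5),(3,5),(5,9),(6,8),(6,9)],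
fanL,
[(0,2),(2,6),(2,11),(3,5),(3,6),(6,8),(6,9),(6,10),(6,11)],
fanL,
fanL,
fanL]
def tc41 : List (List (Nat × Nat)) := [fanL,
fanL,
fanL,
[(1,4),(1,5),(1,6),(1,11),(2,4),(6,8),(6,9),(6,10),(6,11)],
fanL,
[(0,9),(0,10),(1,5),(1,6),(1,9),(2,5),(3,5),(6,8),(6,9)],
[(0,3),(0,5),(0,10),(1,3),(3,5),(5,10),(6,8),(6,9),(6,10)],
fanL,
fanL,
[(1,11),(2,10),(2,11),(3,10),(4,8),(4,9),(4,10),(5,8),(6,8)],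
[(0,8),(0,9),(0,10),(1,8),(2,8),(3,8),(4,8),(5,8),(6,8)],
fanL,
[(0,2),(2,4),(2,11),(4,8),(4,9),(4,10),(4,11),(5,8),(6,8)],
fanL,
fanL,
fanL,
fanL,
[(0,5),(0,8),(0,9),(0,10),(1,5),(2,4),(2,5),(5,8),(6,8)],
[(0,8),(0,9),(0,10),(1,8),(2,8),(3,6),(3,8),(4,6),(6,8)],
fanL,
[(0,2),(0,3),(0,4),(0,7),(0,8),(0,9),(0,10),(4,6),(4,7)],
fanL,
fanL,
fanL,
[(0,8),(0,9),(0,10),(1,3),(1,4),(1,6),(1,8),(4,6),(6,8)],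
fanL,
fanL,
fanL,
fanL,
fanL,
fanL,
[(0,9),(0,10),(1,3),(1,9),(3,9),(4,6),(4,9),(6,8),(6,9)]]
def tc42 : List (List (Nat × Nat)) := [fanL,
fanL,
fanL,
[(0,2),(0,10),(2,4),(2,10),(4,6),(4,7),(4,8),(4,9),(4,10)],
fanL,
[(1,11),(2,5),(2,6),(2,7),(2,8),(2,9),(2,10),(2,11),(3,5)],
[(0,6),(0,7),(0,8),(0,9),(0,10),(1,6),(2,5),(2,6),(3,5)],
fanL,
fanL,
[(0,3),(0,8),(0,9),(0,10),(1,3),(3,8),(4,6),(4,7),(4,8)],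
[(0,8),(0,9),(0,10),(1,8),(2,6),(2,7),(2,8),(3,6),(4,6)],
fanL,
[(0,2),(2,4),(2,11),(4,6),(4,7),(4,8),(4,9),(4,10),(4,11)],
fanL,
fanL,
fanL,
fanL,
[(0,9),(0,10),(1,9),(2,4),(2,5),(2,6),(2,7),(2,8),(2,9)],
[(0,8),(0,9),(0,10),(1,8),(2,4),(2,5),(2,6),(2,7),(2,8)],
fanL,
[(0,2),(0,3),(0,4),(0,5),(0,6),(0,7),(0,8),(0,9),(0,10)],
fanL,
fanL,
fanL,
[(0,2),(2,11),(3,5),(3,6),(3,7),(3,8),(3,9),(3,10),(3,11)],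
fanL,
fanL,
fanL,
fanL,
fanL,
fanL,
[(0,2),(0,4),(0,5),(0,6),(0,7),(0,8),(0,9),(0,10),(2,4)]]
def tc43 : List (List (Nat × Nat)) := [fanL,
[(0,9),(0,10),(1,3),(1,5),(1,9),(3,5),(5,7),(5,8),(5,9)],
[(0,8),(0,9),(0,10),(1,4),(1,5),(1,8),(2,4),(5,7),(5,8)],
fanL,
[(0,2),(0,3),(0,6),(0,7),(0,8),(0,9),(0,10),(3,5),(3,6)],
fanL,
fanL,
fanL,
[(0,8),(0,9),(0,10),(1,3),(1,8),(3,7),(3,8),(4,7),(5,7)],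
fanL,
fanL,
fanL,
fanL,
fanL,
fanL,
[(0,9),(0,10),(1,3),(1,9),(3,9),(4,9),(5,7),(5,8),(5,9)],
[(0,10),(1,5),(1,10),(2,4),(2,5),(5,7),(5,8),(5,9),(5,10)],
fanL,
fanL,
fanL,
fanL,
fanL,
fanL,
[(0,2),(0,8),(0,9),(0,10),(2,8),(3,8),(4,8),(5,7),(5,8)],
fanL,
fanL,
fanL,
[(0,2),(0,3),(0,7),(0,8),(0,9),(0,10),(3,5),(3,7),(5,7)],
fanL,
[(1,11),(2,9),(2,10),(2,11),(3,5),(3,9),(5,7),(5,8),(5,9)],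
[(0,10),(1,3),(1,5),(1,10),(3,5),(5,7),(5,8),(5,9),(5,10)],
fanL]
def tc44 : List (List (Nat × Nat)) := [fanL,
fanL,
fanL,
[(0,2),(0,10),(2,4),(2,10),(4,6),(4,9),(4,10),(6,9),(7,9)],
fanL,
[(0,5),(0,6),(0,9),(0,10),(1,5),(2,5),(3,5),(6,9),(7,9)],
[(0,10),(1,10),(2,5),(2,6),(2,9),(2,10),(3,5),(6,9),(7,9)],
fanL,
fanL,
[(1,11),(2,10),(2,11),(3,6),(3,7),(3,10),(4,6),(7,9),(7,10)],
[(0,10),(1,10),(2,8),(2,9),(2,10),(3,6),(3,7),(3,8),(4,6)],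
fanL,
[(0,2),(2,4),(2,11),(4,10),(4,11),(5,7),(5,10),(7,9),(7,10)],
fanL,
fanL,
fanL,
fanL,
[(0,3),(0,4),(0,5),(0,6),(1,3),(6,11),(7,9),(7,10),(7,11)],
[(0,10),(1,6),(1,7),(1,10),(2,4),(2,5),(2,6),(7,9),(7,10)],
fanL,
[(0,2),(0,3),(0,4),(0,9),(0,10),(4,7),(4,9),(5,7),(7,9)],
fanL,
fanL,
fanL,
[(0,10),(1,7),(1,10),(2,5),(2,7),(3,5),(5,7),(7,9),(7,10)],
fanL,
fanL,
fanL,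
fanL,
fanL,
fanL,
[(1,3),(1,11),(3,5),(3,6),(3,11),(6,11),(7,9),(7,10),(7,11)]]
def tc45 : List (List (Nat × Nat)) := [fanL,
[(0,3),(0,4),(1,3),(4,11),(5,11),(6,11),(7,9),(7,10),(7,11)],
[(0,8),(0,9),(0,10),(1,8),(2,8),(3,5),(3,6),(3,7),(3,8)],
fanL,
[(0,2),(0,3),(0,10),(3,5),(3,10),(5,9),(5,10),(6,9),(7,9)],
fanL,
fanL,
fanL,
[(0,4),(1,3),(1,4),(4,11),(5,11),(6,11),(7,9),(7,10),(7,11)],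
fanL,
fanL,
fanL,
fanL,
fanL,
fanL,
[(0,2),(0,10),(2,4),(2,5),(2,6),(2,7),(2,10),(7,9),(7,10)],
[(0,2),(2,11),(3,10),(3,11),(4,10),(5,9),(5,10),(6,9),(7,9)],
fanL,
fanL,
fanL,
fanL,
fanL,
fanL,
[(0,2),(0,10),(2,6),(2,7),(2,10),(3,6),(4,6),(7,9),(7,10)],
fanL,
fanL,
fanL,
[(0,2),(0,3),(0,4),(0,10),(4,10),(5,9),(5,10),(6,9),(7,9)],
fanL,
[(0,9),(0,10),(1,9),(2,4),(2,8),(2,9),(4,6),(4,7),(4,8)],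
[(0,3),(1,3),(3,5),(3,11),(5,9),(5,10),(5,11),(6,9),(7,9)],
fanL]
def tc46 : List (List (Nat × Nat)) := [fanL,
[(1,11),(2,4),(2,11),(4,6),(4,7),(4,11),(7,9),(7,10),(7,11)],
[(0,4),(0,9),(0,10),(1,4),(2,4),(4,9),(5,8),(5,9),(6,8)],
fanL,
[(0,2),(2,5),(2,11),(3,5),(5,10),(5,11),(6,10),(7,9),(7,10)],
fanL,
fanL,
fanL,
[(0,10),(1,3),(1,4),(1,5),(1,10),(5,8),(5,9),(5,10),(6,8)],
fanL,
fanL,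
fanL,
fanL,
fanL,
fanL,
[(1,3),(1,11),(3,6),(3,8),(3,9),(3,10),(3,11),(4,6),(6,8)],
[(0,2),(0,6),(0,10),(2,4),(2,5),(2,6),(6,10),(7,9),(7,10)],
fanL,
fanL,
fanL,
fanL,
fanL,
fanL,
[(0,6),(0,10),(1,3),(1,4),(1,5),(1,6),(6,10),(7,9),(7,10)],
fanL,
fanL,
fanL,
[(0,2),(0,3),(0,9),(0,10),(3,5),(3,6),(3,7),(3,9),(7,9)],
fanL,
[(1,11),(2,6),(2,8),(2,9),(2,10),(2,11),(3,5),(3,6),(6,8)],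
[(0,8),(0,9),(0,10),(1,8),(2,4),(2,8),(4,8),(5,8),(6,8)],
fanL]
def tc47 : List (List (Nat × Nat)) := [[(0,10),(1,3),(1,10),(3,5),(3,6),(3,8),(3,9),(3,10),(6,8)],
fanL,
fanL,
fanL,
fanL,
fanL,
fanL,
[(1,3),(1,11),(3,5),(3,6),(3,10),(3,11),(6,10),(7,9),(7,10)],
fanL,
fanL,
fanL,
[(1,7),(1,11),(2,7),(3,7),(4,7),(5,7),(7,9),(7,10),(7,11)],
fanL,
[(1,4),(1,7),(1,11),(2,4),(4,7),(5,7),(7,9),(7,10),(7,11)],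
[(0,3),(0,4),(0,5),(0,6),(0,8),(0,9),(0,10),(1,3),(6,8)],
fanL,
fanL,
fanL,
fanL,
[(1,7),(1,11),(2,7),(3,6),(3,7),(4,6),(7,9),(7,10),(7,11)],
fanL,
[(0,9),(0,10),(1,9),(2,9),(3,6),(3,7),(3,9),(4,6),(7,9)],
[(0,10),(1,3),(1,4),(1,10),(4,9),(4,10),(5,7),(5,9),(7,9)],
fanL,
fanL,
[(1,11),(2,8),(2,9),(2,10),(2,11),(3,5),(3,7),(3,8),(5,7)],
[(0,8),(0,9),(0,10),(1,8),(2,8),(3,5),(3,7),(3,8),(5,7)],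
fanL,
[(0,2),(0,9),(0,10),(2,4),(2,9),(4,9),(5,7),(5,9),(7,9)],
fanL,
fanL,
fanL]
def tc48 : List (List (Nat × Nat)) := [[(0,2),(2,4),(2,6),(2,11),(4,6),(6,10),(6,11),(7,9),(7,10)],
fanL,
fanL,
fanL,
fanL,
fanL,
fanL,
[(1,3),(1,4),(1,6),(1,11),(4,6),(6,8),(6,11),(8,11),(9,11)],
fanL,
fanL,
fanL,
[(0,2),(0,8),(2,6),(2,8),(3,6),(4,6),(6,8),(8,11),(9,11)],
fanL,
[(1,11),(2,11),(3,9),(3,11),(4,6),(4,8),(4,9),(6,8),(9,11)],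
[(0,8),(1,8),(2,4),(2,5),(2,7),(2,8),(5,7),(8,11),(9,11)],
fanL,
fanL,
fanL,
fanL,
[(1,4),(1,11),(2,4),(4,11),(5,7),(5,9),(5,11),(7,9),(9,11)],
fanL,
[(1,7),(1,9),(1,11),(2,7),(3,7),(4,7),(5,7),(7,9),(9,11)],
[(0,5),(0,7),(0,8),(1,3),(1,4),(1,5),(5,7),(8,11),(9,11)],
fanL,
fanL,
[(1,11),(2,10),(2,11),(3,5),(3,6),(3,10),(6,10),(7,9),(7,10)],
[(0,10),(1,10),(2,10),(3,5),(3,9),(3,10),(5,7),(5,9),(7,9)],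
fanL,
[(0,2),(2,4),(2,11),(4,7),(4,8),(4,11),(5,7),(8,11),(9,11)],
fanL,
fanL,
fanL]
def tc49 : List (List (Nat × Nat)) := [fanL,
fanL,
fanL,
[(0,2),(0,10),(2,6),(2,8),(2,9),(2,10),(3,5),(3,6),(6,8)],
fanL,
[(1,5),(1,6),(1,11),(2,5),(3,5),(6,8),(6,11),(8,11),(9,11)],
[(0,3),(1,3),(3,5),(3,6),(3,11),(6,10),(6,11),(7,9),(7,10)],
fanL,
fanL,
[(0,5),(0,10),(1,3),(1,4),(1,5),(5,10),(6,10),(7,9),(7,10)],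
[(0,8),(1,8),(2,8),(3,8),(4,8),(5,8),(6,8),(8,11),(9,11)],
fanL,
[(0,2),(0,5),(0,10),(2,4),(2,5),(5,8),(5,9),(5,10),(6,8)],
fanL,
fanL,
fanL,
fanL,
[(0,3),(0,10),(1,3),(3,6),(3,8),(3,9),(3,10),(4,6),(6,8)],
[(0,10),(1,10),(2,10),(3,6),(3,8),(3,9),(3,10),(4,6),(6,8)],
fanL,
[(0,2),(0,3),(0,4),(0,5),(0,10),(5,10),(6,10),(7,9),(7,10)],
fanL,
fanL,
fanL,
[(0,2),(0,5),(0,8),(2,5),(3,5),(5,8),(6,8),(8,11),(9,11)],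
fanL,
fanL,
fanL,
fanL,
fanL,
fanL,
[(1,9),(1,11),(2,4),(2,6),(2,8),(2,9),(4,6),(6,8),(9,11)]]
def tc50 : List (List (Nat × Nat)) := [fanL,
fanL,
fanL,
[(1,4),(1,11),(2,4),(4,6),(4,11),(6,9),(6,11),(7,9),(9,11)],
fanL,
[(1,11),(2,11),(3,11),(4,6),(4,7),(4,10),(4,11),(7,9),(7,10)],
[(0,3),(1,3),(3,5),(3,9),(3,11),(5,9),(6,9),(7,9),(9,11)],
fanL,
fanL,
[(0,5),(0,6),(0,7),(0,10),(1,3),(1,4),(1,5),(7,9),(7,10)],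
[(0,6),(1,6),(2,6),(3,6),(4,6),(6,9),(6,11),(7,9),(9,11)],
fanL,
[(0,6),(0,7),(0,10),(1,4),(1,6),(2,4),(4,6),(7,9),(7,10)],
fanL,
fanL,
fanL,
fanL,
[(1,11),(2,4),(2,5),(2,6),(2,7),(2,10),(2,11),(7,9),(7,10)],
[(0,10),(1,10),(2,4),(2,5),(2,6),(2,7),(2,10),(7,9),(7,10)],
fanL,
[(0,2),(0,3),(0,10),(3,9),(3,10),(4,9),(5,9),(6,9),(7,9)],
fanL,
fanL,
fanL,
[(0,2),(0,5),(0,6),(2,5),(3,5),(6,9),(6,11),(7,9),(9,11)],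
fanL,
fanL,
fanL,
fanL,
fanL,
fanL,
[(1,3),(1,7),(1,9),(1,11),(3,5),(3,6),(3,7),(7,9),(9,11)]]
def tc51 : List (List (Nat × Nat)) := [fanL,
[(0,3),(0,10),(1,3),(3,5),(3,8),(3,9),(3,10),(5,7),(5,8)],
[(0,4),(0,7),(0,8),(1,4),(2,4),(4,7),(5,7),(8,11),(9,11)],
fanL,
[(0,2),(0,3),(0,10),(3,5),(3,8),(3,9),(3,10),(5,7),(5,8)],
fanL,
fanL,
fanL,
[(0,2),(2,7),(2,9),(2,11),(3,7),(4,7),(5,7),(7,9),(9,11)],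
fanL,
fanL,
fanL,
fanL,
fanL,
fanL,
[(0,2),(0,10),(2,4),(2,5),(2,10),(5,7),(5,10),(7,9),(7,10)],
[(0,10),(1,3),(1,6),(1,9),(1,10),(3,6),(4,6),(6,9),(7,9)],
fanL,
fanL,
fanL,
fanL,
fanL,
fanL,
[(0,2),(0,10),(2,10),(3,10),(4,8),(4,9),(4,10),(5,7),(5,8)],
fanL,
fanL,
fanL,
[(1,5),(1,11),(2,5),(3,5),(5,7),(5,10),(5,11),(7,9),(7,10)],
fanL,
[(1,11),(2,4),(2,10),(2,11),(4,10),(5,7),(5,10),(7,9),(7,10)],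
[(0,10),(1,8),(1,9),(1,10),(2,4),(2,6),(2,7),(2,8),(4,6)],
fanL]
def tc52 : List (List (Nat × Nat)) := [fanL,
fanL,
fanL,
[(0,2),(0,3),(3,11),(4,10),(4,11),(5,7),(5,8),(5,9),(5,10)],
fanL,
[(0,5),(0,8),(1,5),(2,5),(3,5),(5,7),(5,8),(8,11),(9,11)],
[(0,6),(1,3),(1,4),(1,6),(4,6),(6,11),(7,11),(8,11),(9,11)],
fanL,
fanL,
[(1,3),(1,4),(1,11),(4,8),(4,11),(5,7),(5,8),(8,11),(9,11)],
[(0,8),(1,8),(2,8),(3,6),(3,7),(3,8),(4,6),(8,11),(9,11)],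
fanL,
[(0,8),(1,7),(1,8),(2,4),(2,5),(2,7),(5,7),(8,11),(9,11)],
fanL,
fanL,
fanL,
fanL,
[(0,3),(0,4),(1,3),(4,7),(4,11),(5,7),(7,11),(8,11),(9,11)],
[(0,6),(1,6),(2,4),(2,5),(2,6),(6,11),(7,11),(8,11),(9,11)],
fanL,
[(0,2),(0,3),(0,10),(3,7),(3,8),(3,9),(3,10),(4,7),(5,7)],
fanL,
fanL,
fanL,
[(0,8),(1,3),(1,4),(1,7),(1,8),(4,7),(5,7),(8,11),(9,11)],
fanL,
fanL,
fanL,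
fanL,
fanL,
fanL,
[(1,7),(1,11),(2,4),(2,7),(4,7),(5,7),(7,11),(8,11),(9,11)]]
def tc53 : List (List (Nat × Nat)) := [fanL,
[(0,3),(0,4),(1,3),(4,11),(5,11),(6,11),(7,11),(8,11),(9,11)],
[(0,10),(1,8),(1,9),(1,10),(2,8),(3,5),(3,6),(3,7),(3,8)],
fanL,
[(0,2),(2,7),(2,11),(3,5),(3,6),(3,7),(7,11),(8,11),(9,11)],
fanL,
fanL,
fanL,
[(0,8),(1,3),(1,4),(1,5),(1,6),(1,7),(1,8),(8,11),(9,11)],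
fanL,
fanL,
fanL,
fanL,
fanL,
fanL,
[(1,9),(1,11),(2,4),(2,5),(2,6),(2,7),(2,8),(2,9),(9,11)],
[(0,2),(2,4),(2,5),(2,11),(5,11),(6,11),(7,11),(8,11),(9,11)],
fanL,
fanL,
fanL,
fanL,
fanL,
fanL,
[(1,7),(1,11),(2,6),(2,7),(3,6),(4,6),(7,11),(8,11),(9,11)],
fanL,
fanL,
fanL,
[(0,2),(0,6),(2,5),(2,6),(3,5),(6,11),(7,11),(8,11),(9,11)],
fanL,
[(1,4),(1,5),(1,11),(2,4),(5,11),(6,11),(7,11),(8,11),(9,11)],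
[(0,3),(1,3),(3,5),(3,11),(5,11),(6,11),(7,11),(8,11),(9,11)],
fanL]
def tc54 : List (List (Nat × Nat)) := [fanL,
[(1,11),(2,8),(2,11),(3,5),(3,8),(5,8),(6,8),(8,11),(9,11)],
[(0,10),(1,4),(1,7),(1,8),(1,9),(1,10),(2,4),(4,6),(4,7)],
fanL,
[(0,2),(0,3),(0,8),(3,7),(3,8),(4,6),(4,7),(8,11),(9,11)],
fanL,
fanL,
fanL,
[(0,4),(1,3),(1,4),(4,6),(4,7),(4,11),(7,11),(8,11),(9,11)],
fanL,
fanL,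
fanL,
fanL,
fanL,
fanL,
[(1,3),(1,11),(3,6),(3,10),(3,11),(4,6),(6,8),(6,9),(6,10)],
[(0,2),(2,4),(2,5),(2,6),(2,9),(2,11),(6,8),(6,9),(9,11)],
fanL,
fanL,
fanL,
fanL,
fanL,
fanL,
[(1,3),(1,4),(1,9),(1,11),(4,8),(4,9),(5,8),(6,8),(9,11)],
fanL,
fanL,
fanL,
[(0,2),(0,3),(0,4),(0,10),(4,8),(4,9),(4,10),(5,8),(6,8)],
fanL,
[(1,11),(2,6),(2,8),(2,11),(3,5),(3,6),(6,8),(8,11),(9,11)],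
[(0,8),(1,8),(2,4),(2,8),(4,8),(5,8),(6,8),(8,11),(9,11)],
fanL]
def tc55 : List (List (Nat × Nat)) := [[(0,2),(2,11),(3,5),(3,6),(3,10),(3,11),(6,8),(6,9),(6,10)],
fanL,
fanL,
fanL,
fanL,
fanL,
fanL,
[(1,9),(1,11),(2,5),(2,9),(3,5),(5,9),(6,8),(6,9),(9,11)],
fanL,
fanL,
fanL,
[(0,2),(0,3),(3,7),(3,11),(4,7),(5,7),(7,11),(8,11),(9,11)],
fanL,
[(1,11),(2,4),(2,5),(2,6),(2,8),(2,11),(6,8),(8,11),(9,11)],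
[(0,3),(1,3),(3,9),(3,11),(4,9),(5,9),(6,8),(6,9),(9,11)],
fanL,
fanL,
fanL,
fanL,
[(0,2),(0,3),(3,11),(4,6),(4,10),(4,11),(6,8),(6,9),(6,10)],
fanL,
[(1,11),(2,6),(2,8),(2,11),(3,6),(4,6),(6,8),(8,11),(9,11)],
[(0,5),(1,3),(1,4),(1,5),(5,9),(5,11),(6,8),(6,9),(9,11)],
fanL,
fanL,
[(1,3),(1,4),(1,6),(1,9),(1,11),(4,6),(6,8),(6,9),(9,11)],
[(0,10),(1,8),(1,9),(1,10),(2,8),(3,8),(4,6),(4,8),(6,8)],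
fanL,
[(0,10),(1,4),(1,5),(1,7),(1,8),(1,9),(1,10),(2,4),(5,7)],
fanL,
fanL,
fanL]
def tc56 : List (List (Nat × Nat)) := [fanL,
fanL,
fanL,
[(0,2),(0,3),(3,11),(4,6),(4,8),(4,10),(4,11),(6,8),(8,10)],
fanL,
[(0,8),(0,10),(1,8),(2,5),(2,6),(2,8),(3,5),(6,8),(8,10)],
[(0,3),(1,3),(3,5),(3,7),(3,11),(5,7),(7,10),(7,11),(8,10)],
fanL,
fanL,
[(1,3),(1,4),(1,5),(1,9),(1,11),(5,9),(6,8),(6,9),(9,11)],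
[(0,10),(1,10),(2,6),(2,8),(2,10),(3,6),(4,6),(6,8),(8,10)],
fanL,
[(0,10),(1,4),(1,6),(1,7),(1,10),(2,4),(4,6),(7,10),(8,10)],
fanL,
fanL,
fanL,
fanL,
[(0,3),(0,4),(1,3),(4,7),(4,11),(5,7),(7,10),(7,11),(8,10)],
[(0,4),(0,5),(0,10),(1,4),(2,4),(5,7),(5,10),(7,10),(8,10)],
fanL,
[(0,10),(1,9),(1,10),(2,7),(2,8),(2,9),(3,7),(4,7),(5,7)],
fanL,
fanL,
fanL,
[(0,10),(1,9),(1,10),(2,8),(2,9),(3,5),(3,6),(3,8),(6,8)],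
fanL,
fanL,
fanL,
fanL,
fanL,
fanL,
[(0,2),(0,4),(0,5),(0,6),(2,4),(6,11),(7,10),(7,11),(8,10)]]
def tc57 : List (List (Nat × Nat)) := [fanL,
[(1,3),(1,5),(1,11),(3,5),(5,11),(6,11),(7,10),(7,11),(8,10)],
[(0,6),(1,6),(2,6),(3,5),(3,6),(6,11),(7,10),(7,11),(8,10)],
fanL,
[(0,10),(1,5),(1,6),(1,7),(1,10),(2,5),(3,5),(7,10),(8,10)],
fanL,
fanL,
fanL,
[(0,2),(2,11),(3,11),(4,8),(4,9),(4,11),(5,8),(6,8),(9,11)],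
fanL,
fanL,
fanL,
fanL,
fanL,
fanL,
[(1,3),(1,11),(3,11),(4,11),(5,11),(6,8),(6,9),(6,11),(9,11)],
[(0,2),(0,4),(0,10),(2,4),(4,6),(4,9),(4,10),(6,8),(6,9)],
fanL,
fanL,
fanL,
fanL,
fanL,
fanL,
[(1,9),(1,11),(2,6),(2,9),(3,6),(4,6),(6,8),(6,9),(9,11)],
fanL,
fanL,
fanL,
[(1,9),(1,11),(2,9),(3,5),(3,8),(3,9),(5,8),(6,8),(9,11)],
fanL,
[(1,11),(2,8),(2,10),(2,11),(3,7),(3,8),(4,6),(4,7),(8,10)],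
[(0,10),(1,10),(2,4),(2,10),(4,6),(4,9),(4,10),(6,8),(6,9)],
fanL]
def tc58 : List (List (Nat × Nat)) := [fanL,
[(1,3),(1,9),(1,11),(3,9),(4,6),(4,7),(4,8),(4,9),(9,11)],
[(0,10),(1,10),(2,10),(3,5),(3,10),(5,10),(6,10),(7,10),(8,10)],
fanL,
[(0,2),(0,8),(0,10),(2,5),(2,6),(2,7),(2,8),(3,5),(8,10)],
fanL,
fanL,
fanL,
[(0,4),(1,3),(1,4),(4,6),(4,7),(4,11),(7,10),(7,11),(8,10)],
fanL,
fanL,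
fanL,
fanL,
fanL,
fanL,
[(1,5),(1,11),(2,4),(2,5),(5,10),(5,11),(6,10),(7,10),(8,10)],
[(0,2),(2,4),(2,5),(2,11),(5,10),(5,11),(6,10),(7,10),(8,10)],
fanL,
fanL,
fanL,
fanL,
fanL,
fanL,
[(1,3),(1,4),(1,5),(1,6),(1,7),(1,11),(7,10),(7,11),(8,10)],
fanL,
fanL,
fanL,
[(0,8),(0,10),(1,5),(1,6),(1,7),(1,8),(2,5),(3,5),(8,10)],
fanL,
[(1,4),(1,5),(1,6),(1,7),(1,8),(1,9),(1,11),(2,4),(9,11)],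
[(0,10),(1,10),(2,4),(2,10),(4,10),(5,10),(6,10),(7,10),(8,10)],
fanL]
def tc59 : List (List (Nat × Nat)) := [[(0,2),(0,6),(0,10),(2,6),(3,5),(3,6),(6,10),(7,10),(8,10)],
fanL,
fanL,
fanL,
fanL,
fanL,
fanL,
[(1,9),(1,11),(2,5),(2,9),(3,5),(5,7),(5,8),(5,9),(9,11)],
fanL,
fanL,
fanL,
[(0,2),(0,3),(3,7),(3,8),(3,9),(3,11),(4,7),(5,7),(9,11)],
fanL,
[(1,11),(2,11),(3,7),(3,11),(4,7),(5,7),(7,10),(7,11),(8,10)],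
[(0,3),(0,8),(0,10),(1,3),(3,7),(3,8),(4,7),(5,7),(8,10)],
fanL,
fanL,
fanL,
fanL,
[(1,7),(1,8),(1,9),(1,11),(2,4),(2,5),(2,7),(5,7),(9,11)],
fanL,
[(0,8),(0,10),(1,8),(2,8),(3,8),(4,8),(5,7),(5,8),(8,10)],
[(0,5),(1,3),(1,4),(1,5),(5,7),(5,8),(5,9),(5,11),(9,11)],
fanL,
fanL,
[(1,11),(2,5),(2,8),(2,10),(2,11),(3,5),(5,7),(5,8),(8,10)],
[(0,10),(1,10),(2,10),(3,5),(3,9),(3,10),(5,7),(5,8),(5,9)],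
fanL,
[(0,10),(1,4),(1,5),(1,9),(1,10),(2,4),(5,7),(5,8),(5,9)],
fanL,
fanL,
fanL]
def tc60 : List (List (Nat × Nat)) := [fanL,
[(0,3),(0,10),(1,3),(3,5),(3,10),(5,7),(5,8),(5,10),(8,10)],
[(0,10),(1,7),(1,9),(1,10),(2,4),(2,6),(2,7),(4,6),(7,9)],
fanL,
[(0,2),(2,5),(2,11),(3,5),(5,7),(5,11),(7,9),(7,11),(9,11)],
fanL,
fanL,
fanL,
[(0,7),(0,8),(0,10),(1,3),(1,7),(3,6),(3,7),(4,6),(8,10)],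
fanL,
fanL,
fanL,
fanL,
fanL,
fanL,
[(1,3),(1,11),(3,11),(4,11),(5,10),(5,11),(6,9),(6,10),(7,9)],
[(0,7),(0,8),(0,10),(1,3),(1,7),(3,7),(4,7),(5,7),(8,10)],
fanL,
fanL,
fanL,
fanL,
fanL,
fanL,
[(0,8),(0,10),(1,3),(1,4),(1,5),(1,8),(5,7),(5,8),(8,10)],
fanL,
fanL,
fanL,
[(0,2),(0,3),(0,4),(0,10),(4,7),(4,9),(4,10),(5,7),(7,9)],
fanL,
[(0,6),(0,10),(1,6),(2,6),(3,5),(3,6),(6,9),(6,10),(7,9)],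
[(0,7),(0,8),(0,10),(1,7),(2,4),(2,7),(4,7),(5,7),(8,10)],
fanL]
def tc61 : List (List (Nat × Nat)) := [[(0,10),(1,3),(1,10),(3,5),(3,6),(3,7),(3,8),(3,10),(8,10)],
fanL,
fanL,
fanL,
fanL,
fanL,
fanL,
[(0,2),(0,10),(2,10),(3,5),(3,6),(3,7),(3,8),(3,10),(8,10)],
fanL,
fanL,
fanL,
[(0,2),(0,3),(0,4),(0,5),(5,9),(5,11),(6,9),(7,9),(9,11)],
fanL,
[(1,11),(2,4),(2,5),(2,11),(5,9),(5,11),(6,9),(7,9),(9,11)],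
[(0,3),(0,4),(0,5),(1,3),(5,9),(5,11),(6,9),(7,9),(9,11)],
fanL,
fanL,
fanL,
fanL,
[(0,2),(0,5),(0,6),(0,7),(0,8),(0,10),(2,4),(2,5),(8,10)],
fanL,
[(1,11),(2,6),(2,7),(2,8),(2,10),(2,11),(3,6),(4,6),(8,10)],
[(0,3),(0,6),(0,7),(0,8),(0,10),(1,3),(3,6),(4,6),(8,10)],
fanL,
fanL,
[(0,6),(0,7),(0,8),(0,10),(1,6),(2,5),(2,6),(3,5),(8,10)],
[(0,10),(1,7),(1,9),(1,10),(2,7),(3,7),(4,6),(4,7),(7,9)],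
fanL,
[(0,2),(0,6),(0,7),(2,4),(2,6),(4,6),(7,9),(7,11),(9,11)],
fanL,
fanL,
fanL]
def tc62 : List (List (Nat × Nat)) := [[(0,2),(2,8),(2,9),(2,11),(3,7),(3,8),(4,6),(4,7),(9,11)],
fanL,
fanL,
fanL,
fanL,
fanL,
fanL,
[(1,6),(1,8),(1,9),(1,11),(2,5),(2,6),(3,5),(6,8),(9,11)],
fanL,
fanL,
fanL,
[(1,6),(1,8),(1,9),(1,11),(2,6),(3,6),(4,6),(6,8),(9,11)],
fanL,
[(0,8),(0,10),(1,8),(2,8),(3,6),(3,8),(4,6),(6,8),(8,10)],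
[(0,10),(1,10),(2,4),(2,10),(4,6),(4,7),(4,9),(4,10),(7,9)],
fanL,
fanL,
fanL,
fanL,
[(1,4),(1,11),(2,4),(4,11),(5,11),(6,8),(6,10),(6,11),(8,10)],
fanL,
[(1,11),(2,11),(3,11),(4,11),(5,11),(6,11),(7,9),(7,11),(9,11)],
[(0,10),(1,3),(1,4),(1,5),(1,6),(1,10),(6,8),(6,10),(8,10)],
fanL,
fanL,
[(1,11),(2,10),(2,11),(3,5),(3,6),(3,7),(3,9),(3,10),(7,9)],
[(0,5),(1,5),(2,5),(3,5),(5,11),(6,8),(6,10),(6,11),(8,10)],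
fanL,
[(0,2),(2,9),(2,11),(3,5),(3,9),(5,8),(5,9),(6,8),(9,11)],
fanL,
fanL,
fanL]
def tc63 : List (List (Nat × Nat)) := [fanL,
fanL,
fanL,
[(0,2),(0,3),(0,5),(0,10),(3,5),(5,10),(6,8),(6,10),(8,10)],
fanL,
[(0,5),(0,10),(1,5),(2,5),(3,5),(5,10),(6,8),(6,10),(8,10)],
[(0,7),(1,3),(1,6),(1,7),(3,5),(3,6),(7,9),(7,11),(9,11)],
fanL,
fanL,
[(1,3),(1,4),(1,11),(4,10),(4,11),(5,10),(6,8),(6,10),(8,10)],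
[(0,10),(1,10),(2,7),(2,8),(2,10),(3,7),(4,7),(5,7),(8,10)],
fanL,
[(0,2),(0,8),(0,10),(2,4),(2,5),(2,6),(2,8),(6,8),(8,10)],
fanL,
fanL,
fanL,
fanL,
[(1,11),(2,10),(2,11),(3,6),(3,7),(3,9),(3,10),(4,6),(7,9)],
[(0,10),(1,4),(1,9),(1,10),(2,4),(4,9),(5,7),(5,9),(7,9)],
fanL,
[(0,2),(0,3),(0,4),(0,5),(0,7),(0,8),(0,10),(5,7),(8,10)],
fanL,
fanL,
fanL,
[(0,10),(1,3),(1,10),(3,8),(3,10),(4,6),(4,8),(6,8),(8,10)],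
fanL,
fanL,
fanL,
fanL,
fanL,
fanL,
[(0,5),(0,10),(1,3),(1,5),(3,5),(5,7),(5,9),(5,10),(7,9)]]
def tdataC : List (List (List (Nat × Nat))) := [tc0,tc1,tc2,tc3,tc4,tc5,tc6,tc7,tc8,tc9,tc10,tc11,tc12,tc13,tc14,tc15,tc16,tc17,tc18,tc19,tc20,tc21,tc22,tc23,tc24,tc25,tc26,tc27,tc28,tc29,tc30,tc31,tc32,tc33,tc34,tc35,tc36,tc37,tc38,tc39,tc40,tc41,tc42,tc43,tc44,tc45,tc46,tc47,tc48,tc49,tc50,tc51,tc52,tc53,tc54,tc55,tc56,tc57,tc58,tc59,tc60,tc61,tc62,tc63]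
def getT (n : Nat) : List (Nat × Nat) := (tdataC.getD (n / 32) []).getD (n % 32) fanL

def properP (l : List (ℕ × ℕ)) (sl : List (Fin 3)) : Prop :=
  ∀ p ∈ l, sl.getD p.1 0 ≠ sl.getD p.2 0
instance (l : List (ℕ × ℕ)) (sl : List (Fin 3)) : Decidable (properP l sl) := by
  unfold properP; infer_instance

def altL : List (Fin 3) := [0,2,0,2,0,2,0,2,0,2,0,2]

set_option maxRecDepth 10000 in
set_option maxHeartbeats 1000000 in
lemma L2 : ∀ a < 64, ∀ b < 32, TriOK (getT (32 * a + b)) := by decide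

set_option maxRecDepth 10000 in
set_option maxHeartbeats 4000000 in
lemma L1 : ∀ a < 64, ∀ b < 32,
    (seqAux 0 (decode 11 (32 * a + b))).getD 11 0 = 2 →
    seqAux 0 (decode 11 (32 * a + b)) ≠ altL →
      properP (getT (32 * a + b)) (seqAux 0 (decode 11 (32 * a + b))) := by decide

noncomputable def slOf (z : ℕ → P1 (ZMod 2)) : List (Fin 3) :=
  [code (z 0), code (z 1), code (z 2), code (z 3), code (z 4), code (z 5), code (z 6),
   code (z 7), code (z 8), code (z 9), code (z 10), code (z 11)]

open Classical in
noncomputable def TzF (z : ℕ → P1 (ZMod 2)) : Triangulation 11 :=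
  if h : ∃ l, ∃ hl : TriOK l, properP l (slOf z) then
    triOfList h.choose h.choose_spec.choose
  else triOfList fanL fanOK

lemma hgetsl (z : ℕ → P1 (ZMod 2)) (i : ℕ) (hi : i ≤ 11) :
    (slOf z).getD i 0 = code (z i) := by
  interval_cases i <;> rfl

lemma proper_bridge (l : List (ℕ × ℕ)) (h : TriOK l) (z : ℕ → P1 (ZMod 2))
    (hp : properP l (slOf z)) : ProperDiags (triOfList l h) z := by
  intro d hd
  rw [triOfList, List.mem_toFinset, List.mem_pmap] at hd
  obtain ⟨p, hpl, rfl⟩ := hd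
  have hdg := h.2.1 p hpl
  have hb2 : p.2 ≤ 11 := hdg.2.1
  have hb1 : p.1 ≤ 11 := by have := hdg.1; omega
  have := hp p hpl
  rw [hgetsl z p.1 hb1, hgetsl z p.2 hb2] at this
  exact fun he => this (by rw [he])

lemma TzF_eq (z : ℕ → P1 (ZMod 2)) :
    ∃ (l : List (ℕ × ℕ)) (h : TriOK l), TzF z = triOfList l h := by
  unfold TzF
  split
  next h => exact ⟨h.choose, h.choose_spec.choose, rfl⟩
  next _ => exact ⟨fanL, fanOK, rfl⟩

lemma e30 : e3 0 = ptZero (ZMod 2) := rfl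
lemma e32 : e3 2 = ptInf (ZMod 2) := rfl

universe u in
theorem stmt18 :
    ∃ Tz : (ℕ → P1 (ZMod 2)) → Triangulation 11,
      (∀ z, XCond (ZMod 2) 11 z → ¬ IsAltSeq (ZMod 2) 11 z → ProperDiags (Tz z) z) ∧
      ∀ (F : Type u) [Field F], (∃ c : F, c ≠ 0 ∧ c ≠ 1) →
        ∃ y : ℕ → P1 F, (XCond F 11 y ∧ ¬ IsAltSeq F 11 y) ∧
          ∀ z, XCond (ZMod 2) 11 z → ¬ IsAltSeq (ZMod 2) 11 z →
            ¬ ProperDiags (Tz z) y := by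
  refine ⟨TzF, ?_, ?_⟩
  · -- covering over ZMod 2
    intro z hX hA
    have hz' : ∀ i, z i = e3 (code (z i)) := fun i => (ecode (z i)).symm
    have hne : ∀ i, i < 11 → code (z i) ≠ code (z (i+1)) := by
      intro i hi he
      exact hX.2.2 i hi (by rw [hz' i, hz' (i+1), he])
    obtain ⟨b0, h0⟩ := nextV_surj (code (z 0)) (code (z 1)) (hne 0 (by norm_num))
    obtain ⟨b1, h1⟩ := nextV_surj (code (z 1)) (code (z 2)) (hne 1 (by norm_num))
    obtain ⟨b2, h2⟩ := nextV_surj (code (z 2)) (code (z 3)) (hne 2 (by norm_num))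
    obtain ⟨b3, h3⟩ := nextV_surj (code (z 3)) (code (z 4)) (hne 3 (by norm_num))
    obtain ⟨b4, h4⟩ := nextV_surj (code (z 4)) (code (z 5)) (hne 4 (by norm_num))
    obtain ⟨b5, h5⟩ := nextV_surj (code (z 5)) (code (z 6)) (hne 5 (by norm_num))
    obtain ⟨b6, h6⟩ := nextV_surj (code (z 6)) (code (z 7)) (hne 6 (by norm_num))
    obtain ⟨b7, h7⟩ := nextV_surj (code (z 7)) (code (z 8)) (hne 7 (by norm_num))
    obtain ⟨b8, h8⟩ := nextV_surj (code (z 8)) (code (z 9)) (hne 8 (by norm_num))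
    obtain ⟨b9, h9⟩ := nextV_surj (code (z 9)) (code (z 10)) (hne 9 (by norm_num))
    obtain ⟨b10, h10⟩ := nextV_surj (code (z 10)) (code (z 11)) (hne 10 (by norm_num))
    have hs0 : (0 : Fin 3) = code (z 0) := by rw [hX.1, code_ptZero]
    have hseq : seqAux 0 [b0,b1,b2,b3,b4,b5,b6,b7,b8,b9,b10] = slOf z := by
      rw [hs0, slOf]
      simp only [seqAux, ← h0, ← h1, ← h2, ← h3, ← h4, ← h5, ← h6, ← h7, ← h8, ← h9, ← h10]
    have hlen : ([b0,b1,b2,b3,b4,b5,b6,b7,b8,b9,b10] : List Bool).length = 11 := rfl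
    have hnlt : encode [b0,b1,b2,b3,b4,b5,b6,b7,b8,b9,b10] < 2048 := by
      have := encode_lt [b0,b1,b2,b3,b4,b5,b6,b7,b8,b9,b10]
      rw [hlen] at this
      norm_num at this
      exact this
    have hdec : decode 11 (encode [b0,b1,b2,b3,b4,b5,b6,b7,b8,b9,b10]) =
        [b0,b1,b2,b3,b4,b5,b6,b7,b8,b9,b10] := by
      have := decode_encode [b0,b1,b2,b3,b4,b5,b6,b7,b8,b9,b10]
      rwa [hlen] at this
    set n := encode [b0,b1,b2,b3,b4,b5,b6,b7,b8,b9,b10] with hn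
    have ha : n / 32 < 64 := by omega
    have hb : n % 32 < 32 := by omega
    have hnab : 32 * (n / 32) + n % 32 = n := by omega
    have key := L1 (n / 32) ha (n % 32) hb
    have hT := L2 (n / 32) ha (n % 32) hb
    rw [hnab] at key hT
    rw [hdec, hseq] at key
    have e1 : (slOf z).getD 11 0 = 2 := by
      rw [hgetsl z 11 (le_refl 11), hX.2.1, code_ptInf]
    have e2 : slOf z ≠ altL := by
      intro hcontra
      apply hA
      simp only [slOf, altL, List.cons.injEq, and_true] at hcontra
      obtain ⟨q0,q1,q2,q3,q4,q5,q6,q7,q8,q9,q10,q11⟩ := hcontra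
      intro i hi
      interval_cases i
      · rw [hz' 0, q0]; norm_num [e30]
      · rw [hz' 1, q1]; norm_num [e32]
      · rw [hz' 2, q2]; norm_num [e30]
      · rw [hz' 3, q3]; norm_num [e32]
      · rw [hz' 4, q4]; norm_num [e30]
      · rw [hz' 5, q5]; norm_num [e32]
      · rw [hz' 6, q6]; norm_num [e30]
      · rw [hz' 7, q7]; norm_num [e32]
      · rw [hz' 8, q8]; norm_num [e30]
      · rw [hz' 9, q9]; norm_num [e32]
      · rw [hz' 10, q10]; norm_num [e30]
      · rw [hz' 11, q11]; norm_num [e32]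
    have hex : ∃ l, ∃ _ : TriOK l, properP l (slOf z) := ⟨getT n, hT, key e1 e2⟩
    unfold TzF
    split
    next h => exact proper_bridge _ _ z h.choose_spec.choose_spec
    next h => exact absurd hex h
  · -- witness over a larger field
    intro F hF hc
    obtain ⟨c, hc0, hc1⟩ := hc
    have hbne : ((c, 1) : F × F) ≠ 0 := fun h => one_ne_zero (congrArg Prod.snd h)
    have hZI : ptZero F ≠ ptInf F := p1_ne _ _ (by norm_num)
    have hZa : ptZero F ≠ ptOne F := p1_ne _ _ (by norm_num)
    have hIa : ptInf F ≠ ptOne F := p1_ne _ _ (by norm_num)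
    have hZb : ptZero F ≠ Projectivization.mk F (c, 1) hbne := p1_ne _ _ (by norm_num)
    have hIb : ptInf F ≠ Projectivization.mk F (c, 1) hbne := p1_ne _ _ (by simpa using Ne.symm hc0)
    have hab : ptOne F ≠ Projectivization.mk F (c, 1) hbne := p1_ne _ _ (by simpa using Ne.symm hc1)
    refine ⟨fun i => match i with
      | 0 => ptZero F | 1 => ptOne F | 2 => ptInf F | 3 => ptOne F
      | 4 => Projectivization.mk F (c, 1) hbne | 5 => ptZero F | 6 => ptInf F
      | 7 => Projectivization.mk F (c, 1) hbne | 8 => ptOne F | 9 => ptZero F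
      | 10 => Projectivization.mk F (c, 1) hbne | _ + 11 => ptInf F,
      ⟨⟨rfl, rfl, ?_⟩, ?_⟩, ?_⟩
    · intro i hi
      interval_cases i
      · exact hZa
      · exact hIa.symm
      · exact hIa
      · exact hab
      · exact hZb.symm
      · exact hZI
      · exact hIb
      · exact hab.symm
      · exact hZa.symm
      · exact hZb
      · exact hIb.symm
    · intro hAlt
      have h1 := hAlt 1 (by norm_num)
      norm_num at h1
      exact hIa.symm h1
    · intro z _ _
      obtain ⟨l, hl, heq⟩ := TzF_eq z
      rw [heq]
      intro hPD
      obtain ⟨p, hpl, hpbad⟩ := hl.2.2.2.2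
      have hne := hPD _ (mem_triOfList hl hpl)
      apply hne
      simp only [badPairs, List.mem_cons, List.not_mem_nil, or_false] at hpbad
      rcases hpbad with rfl|rfl|rfl|rfl|rfl|rfl|rfl|rfl|rfl|rfl|rfl|rfl <;> rfl
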